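/- arXiv:1105.4070 — 3 statements merged into one kernel-verified Lean document; each statement's English description precedes it below -/
import Mathlib

section
/- Let N ≥ 2 be a natural number, s ∈ ℝ, n ∈ ℕ, and let h₁ < h₂ < … < h_n be distinct real numbers. Let u₁, …, u_n be measurable complex-valued functions on the unit sphere S^{N−1} with 0 < ∫_{S^{N−1}} |u_i|² dω < ∞ for every i. Given coefficients c₁, …, c_n ∈ ℂ, define f(x) := Σ_{i=1}^n c_i · ‖x‖^{h_i} · u_i(x/‖x‖) for x ≠ 0. Then f belongs to L²_s(A_1), i.e. ∫_{A_1} (1+‖x‖²)^s |f(x)|² dx < ∞, if and only if c_i = 0 for every index i with h_i ≥ −s − N/2. (This is the membership criterion of Theorem 2.6: a finite spherical-harmonics-type expansion lies in the weighted space exactly when all coefficients of homogeneity degree ≥ −s − N/2 vanish.) -/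
open MeasureTheory Metric
open scoped ENNReal

noncomputable section

/-- The radial projection of a nonzero vector onto the unit sphere. -/
def sphereProj {N : ℕ} (x : EuclideanSpace ℝ (Fin N)) (hx : x ≠ 0) :
    Metric.sphere (0 : EuclideanSpace ℝ (Fin N)) 1 :=
  ⟨‖x‖⁻¹ • x, by
    rw [mem_sphere_zero_iff_norm, norm_smul, norm_inv, norm_norm,
      inv_mul_cancel₀ (norm_ne_zero_iff.mpr hx)]⟩

section Aux

open Set
open scoped ENNReal

lemma helper1 {z : ℝ} (hz : 0 ≤ z) : (ENNReal.ofReal z) ^ (2:ℝ) = ENNReal.ofReal (z ^ 2) := by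
  rw [show ((2:ℝ)) = ((2:ℕ):ℝ) by norm_num, ENNReal.rpow_natCast, ENNReal.ofReal_pow hz]

lemma helper2 {z : ℝ} (hz : 0 ≤ z) :
    (ENNReal.ofReal (z ^ 2)) ^ (1/(2:ℝ)) = ENNReal.ofReal z := by
  rw [← helper1 hz, ← ENNReal.rpow_mul]; norm_num

lemma lint_rpow_lt_top {e : ℝ} (he : e < -1) :
    ∫⁻ r in Set.Ici (1:ℝ), ENNReal.ofReal (r ^ e) < ⊤ := by
  have hi : IntegrableOn (fun r : ℝ => r ^ e) (Set.Ioi 1) := by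
    rw [integrableOn_Ioi_rpow_iff one_pos]; exact he
  rw [← Measure.restrict_congr_set Ioi_ae_eq_Ici]
  calc ∫⁻ r in Set.Ioi (1:ℝ), ENNReal.ofReal (r ^ e)
      ≤ ∫⁻ r in Set.Ioi (1:ℝ), (‖r ^ e‖₊ : ℝ≥0∞) :=
        lintegral_mono fun r => Real.ofReal_le_enorm _
    _ < ⊤ := hi.2

lemma lint_rpow_eq_top {e : ℝ} (he : -1 ≤ e) {R : ℝ} (hR : 1 ≤ R) :
    ∫⁻ r in Set.Ici R, ENNReal.ofReal (r ^ e) = ⊤ := by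
  have hR0 : (0:ℝ) < R := lt_of_lt_of_le one_pos hR
  by_contra hne
  have hfin : ∫⁻ r in Set.Ioi R, ENNReal.ofReal (r ^ e) < ⊤ := by
    rw [Measure.restrict_congr_set Ioi_ae_eq_Ici]; exact lt_top_iff_ne_top.mpr hne
  have hi : IntegrableOn (fun r : ℝ => r ^ e) (Set.Ioi R) := by
    refine ⟨(Measurable.aestronglyMeasurable (by fun_prop)), ?_⟩
    have hc : ∀ᵐ r ∂(volume.restrict (Set.Ioi R)),
        (‖(fun r : ℝ => r ^ e) r‖₊ : ℝ≥0∞) = ENNReal.ofReal (r ^ e) := by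
      filter_upwards [ae_restrict_mem measurableSet_Ioi] with r hr
      exact Real.enorm_eq_ofReal (Real.rpow_nonneg (le_of_lt (hR0.trans hr)) e)
    show ∫⁻ r in Set.Ioi R, (‖(fun r : ℝ => r ^ e) r‖₊ : ℝ≥0∞) < ⊤
    rwa [lintegral_congr_ae hc]
  have := (integrableOn_Ioi_rpow_iff hR0).mp hi
  linarith

lemma weight_upper {s r : ℝ} (hr : 1 ≤ r) :
    (1 + r ^ 2) ^ s ≤ max 1 (2 ^ s) * r ^ (2 * s) := by
  have hr0 : (0:ℝ) < r := lt_of_lt_of_le one_pos hr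
  have h2 : r ^ (2 * s) = (r ^ 2) ^ s := by
    rw [← Real.rpow_natCast r 2, ← Real.rpow_mul hr0.le]; norm_num
  rcases le_or_gt 0 s with hs | hs
  · calc (1 + r ^ 2) ^ s ≤ (2 * r ^ 2) ^ s :=
          Real.rpow_le_rpow (by positivity) (by nlinarith) hs
      _ = 2 ^ s * (r ^ 2) ^ s := Real.mul_rpow (by norm_num) (by positivity)
      _ ≤ max 1 (2 ^ s) * r ^ (2 * s) := by
          rw [h2]; gcongr; exact le_max_right _ _
  · calc (1 + r ^ 2) ^ s ≤ (r ^ 2) ^ s :=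
          Real.rpow_le_rpow_of_nonpos (by positivity) (by nlinarith) hs.le
      _ = r ^ (2 * s) := h2.symm
      _ ≤ max 1 (2 ^ s) * r ^ (2 * s) := by
          exact le_mul_of_one_le_left (Real.rpow_nonneg hr0.le _) (le_max_left _ _)

lemma weight_lower {s r : ℝ} (hr : 1 ≤ r) :
    min 1 (2 ^ s) * r ^ (2 * s) ≤ (1 + r ^ 2) ^ s := by
  have hr0 : (0:ℝ) < r := lt_of_lt_of_le one_pos hr
  have h2 : r ^ (2 * s) = (r ^ 2) ^ s := by
    rw [← Real.rpow_natCast r 2, ← Real.rpow_mul hr0.le]; norm_num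
  rcases le_or_gt 0 s with hs | hs
  · calc min 1 (2 ^ s) * r ^ (2 * s) ≤ r ^ (2 * s) :=
          mul_le_of_le_one_left (Real.rpow_nonneg hr0.le _) (min_le_left _ _)
      _ = (r ^ 2) ^ s := h2
      _ ≤ (1 + r ^ 2) ^ s := Real.rpow_le_rpow (by positivity) (by nlinarith) hs
  · calc min 1 (2 ^ s) * r ^ (2 * s) ≤ 2 ^ s * (r ^ 2) ^ s := by
          rw [h2]; gcongr; exact min_le_right _ _
      _ = (2 * r ^ 2) ^ s := (Real.mul_rpow (by norm_num) (by positivity)).symm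
      _ ≤ (1 + r ^ 2) ^ s :=
          Real.rpow_le_rpow_of_nonpos (by positivity) (by nlinarith) hs.le

lemma mink {α : Type*} [MeasurableSpace α] (μ : Measure α) {ι : Type*} (s : Finset ι)
    (f : ι → α → ℝ≥0∞) (hf : ∀ i, Measurable (f i)) :
    (∫⁻ a, (∑ i ∈ s, f i a) ^ (2:ℝ) ∂μ) ^ (1/(2:ℝ)) ≤
      ∑ i ∈ s, (∫⁻ a, (f i a) ^ (2:ℝ) ∂μ) ^ (1/(2:ℝ)) := by
  classical
  induction s using Finset.induction_on with
  | empty =>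
      simp [ENNReal.zero_rpow_of_pos (by norm_num : (0:ℝ) < 2),
        ENNReal.zero_rpow_of_pos (by norm_num : (0:ℝ) < 1/2)]
  | @insert a t ha ih =>
      simp only [Finset.sum_insert ha]
      calc (∫⁻ x, (f a x + ∑ i ∈ t, f i x) ^ (2:ℝ) ∂μ) ^ (1/(2:ℝ))
          ≤ (∫⁻ x, f a x ^ (2:ℝ) ∂μ) ^ (1/(2:ℝ))
              + (∫⁻ x, (∑ i ∈ t, f i x) ^ (2:ℝ) ∂μ) ^ (1/(2:ℝ)) :=
            ENNReal.lintegral_Lp_add_le (hf a).aemeasurable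
              (Finset.measurable_sum t fun i _ => hf i).aemeasurable one_le_two
        _ ≤ _ := add_le_add_right ih _

lemma polar_master {N : ℕ} (hN : 2 ≤ N)
    (g : Metric.sphere (0 : EuclideanSpace ℝ (Fin N)) 1 → ℝ → ℝ≥0∞)
    (hg : Measurable fun p : Metric.sphere (0 : EuclideanSpace ℝ (Fin N)) 1 × ℝ => g p.1 p.2)
    (G : EuclideanSpace ℝ (Fin N) → ℝ≥0∞)
    (hG : ∀ x (hx : x ≠ 0), G x = g (sphereProj x hx) ‖x‖) :
    ∫⁻ x, G x = ∫⁻ r in Set.Ioi (0:ℝ),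
      ENNReal.ofReal (r ^ (N-1)) *
        (∫⁻ y, g y r ∂(volume : Measure (EuclideanSpace ℝ (Fin N))).toSphere) := by
  haveI : Nonempty (Fin N) := ⟨⟨0, by omega⟩⟩
  haveI : Nontrivial (EuclideanSpace ℝ (Fin N)) := inferInstance
  have hdim : Module.finrank ℝ (EuclideanSpace ℝ (Fin N)) = N := finrank_euclideanSpace_fin
  set g' : Metric.sphere (0:EuclideanSpace ℝ (Fin N)) 1 × Set.Ioi (0:ℝ) → ℝ≥0∞ := fun p => g p.1 p.2.1 with hg'
  have hg'm : Measurable g' := hg.comp (measurable_fst.prodMk (measurable_subtype_coe.comp measurable_snd))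
  have hF : Measurable fun t : ℝ => ∫⁻ y, g y t ∂(volume : Measure (EuclideanSpace ℝ (Fin N))).toSphere :=
    Measurable.lintegral_prod_left hg
  calc ∫⁻ x, G x ∂volume
      = ∫⁻ x in {(0:EuclideanSpace ℝ (Fin N))}ᶜ, G x ∂volume := by rw [restrict_compl_singleton]
    _ = ∫⁻ x : ({(0:EuclideanSpace ℝ (Fin N))}ᶜ : Set (EuclideanSpace ℝ (Fin N))), G x.1 ∂((volume : Measure (EuclideanSpace ℝ (Fin N))).comap (↑)) :=
        (lintegral_subtype_comap (measurableSet_singleton 0).compl _).symm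
    _ = ∫⁻ x : ({(0:EuclideanSpace ℝ (Fin N))}ᶜ : Set (EuclideanSpace ℝ (Fin N))), g' (homeomorphUnitSphereProd (EuclideanSpace ℝ (Fin N)) x) ∂((volume : Measure (EuclideanSpace ℝ (Fin N))).comap (↑)) := by
        refine lintegral_congr fun x => ?_
        have hx : (x : EuclideanSpace ℝ (Fin N)) ≠ 0 := x.2
        rw [hG x.1 hx]
        show g _ _ = g (homeomorphUnitSphereProd _ x).1 (homeomorphUnitSphereProd _ x).2.1
        congr 1
        · ext1
          simp [sphereProj]
        · simp
    _ = ∫⁻ p : Metric.sphere (0:EuclideanSpace ℝ (Fin N)) 1 × Set.Ioi (0:ℝ), g' p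
          ∂((volume : Measure (EuclideanSpace ℝ (Fin N))).toSphere.prod (Measure.volumeIoiPow (N-1))) := by
        have key := (Measure.measurePreserving_homeomorphUnitSphereProd
          (volume : Measure (EuclideanSpace ℝ (Fin N)))).lintegral_comp hg'm
        rw [hdim] at key
        exact key
    _ = ∫⁻ r : Set.Ioi (0:ℝ), ∫⁻ y, g' (y, r) ∂(volume : Measure (EuclideanSpace ℝ (Fin N))).toSphere
          ∂(Measure.volumeIoiPow (N-1)) := lintegral_prod_symm' g' hg'm
    _ = ∫⁻ r in Set.Ioi (0:ℝ), ENNReal.ofReal (r ^ (N-1)) *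
          (∫⁻ y, g y r ∂(volume : Measure (EuclideanSpace ℝ (Fin N))).toSphere) := by
        have hFm : Measurable fun r : Set.Ioi (0:ℝ) =>
            ∫⁻ y, g' (y, r) ∂(volume : Measure (EuclideanSpace ℝ (Fin N))).toSphere :=
          hg'm.lintegral_prod_left'
        rw [Measure.volumeIoiPow, lintegral_withDensity_eq_lintegral_mul _
          (by measurability) hFm]
        exact lintegral_subtype_comap measurableSet_Ioi
          (fun t : ℝ => ENNReal.ofReal (t ^ (N-1)) *
            ∫⁻ y, g y t ∂(volume : Measure (EuclideanSpace ℝ (Fin N))).toSphere)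

end Aux

theorem expansion_weighted_L2_membership_criterion
    (N : ℕ) (hN : 2 ≤ N) (s : ℝ) (n : ℕ) (h : Fin n → ℝ) (hmono : StrictMono h)
    (u : Fin n → (Metric.sphere (0 : EuclideanSpace ℝ (Fin N)) 1 → ℂ))
    (humeas : ∀ i, Measurable (u i))
    (hupos : ∀ i, 0 < ∫⁻ y, ENNReal.ofReal (‖u i y‖ ^ 2)
      ∂((volume : Measure (EuclideanSpace ℝ (Fin N))).toSphere))
    (hufin : ∀ i, (∫⁻ y, ENNReal.ofReal (‖u i y‖ ^ 2)
      ∂((volume : Measure (EuclideanSpace ℝ (Fin N))).toSphere)) < ⊤)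
    (c : Fin n → ℂ)
    (f : EuclideanSpace ℝ (Fin N) → ℂ)
    (hf : ∀ (x : EuclideanSpace ℝ (Fin N)) (hx : x ≠ 0),
      f x = ∑ i, c i * ((‖x‖ ^ h i : ℝ) : ℂ) * u i (sphereProj x hx)) :
    (∫⁻ x in {x : EuclideanSpace ℝ (Fin N) | 1 ≤ ‖x‖},
        ENNReal.ofReal ((1 + ‖x‖ ^ 2) ^ s * ‖f x‖ ^ 2)) < ⊤ ↔
      ∀ i, -s - N / 2 ≤ h i → c i = 0 := by
  classical
  have hN1 : 1 ≤ N := le_trans one_le_two hN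
  set ω := (volume : Measure (EuclideanSpace ℝ (Fin N))).toSphere with hω
  set v : ℝ → (Metric.sphere (0 : EuclideanSpace ℝ (Fin N)) 1) → ℂ :=
    fun r y => ∑ i, c i * ((r ^ h i : ℝ) : ℂ) * u i y with hv
  set Ψ : ℝ → ℝ≥0∞ := fun r => ∫⁻ y, ENNReal.ofReal (‖v r y‖ ^ 2) ∂ω with hΨ
  set K : Fin n → ℝ≥0∞ := fun i => ∫⁻ y, ENNReal.ofReal (‖u i y‖ ^ 2) ∂ω with hK
  have hKfin : ∀ i, K i < ⊤ := hufin
  have hKpos : ∀ i, 0 < K i := hupos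
  have hvmeas : Measurable fun p :
      (Metric.sphere (0 : EuclideanSpace ℝ (Fin N)) 1) × ℝ => v p.2 p.1 := by
    apply Finset.measurable_sum
    intro i _
    exact (measurable_const.mul (Complex.measurable_ofReal.comp
      (by fun_prop : Measurable fun p :
        (Metric.sphere (0 : EuclideanSpace ℝ (Fin N)) 1) × ℝ => p.2 ^ h i))).mul
      ((humeas i).comp measurable_fst)
  have hcoll : ∀ (a r : ℝ), 0 < r →
      (r:ℝ) ^ (N-1:ℕ) * (r ^ (2*s) * (r ^ a) ^ 2) = r ^ (2*s + 2*a + ((N:ℝ) - 1)) := by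
    intro a r hr
    rw [← Real.rpow_natCast (r ^ a) 2, ← Real.rpow_mul hr.le, ← Real.rpow_natCast r (N-1),
      ← Real.rpow_add hr, ← Real.rpow_add hr]
    congr 1
    push_cast [Nat.cast_sub hN1]
    ring
  have hAone : MeasurableSet {x : EuclideanSpace ℝ (Fin N) | 1 ≤ ‖x‖} :=
    (isClosed_le (continuous_const : Continuous fun _ : EuclideanSpace ℝ (Fin N) => (1:ℝ)) continuous_norm).measurableSet
  set g : (Metric.sphere (0 : EuclideanSpace ℝ (Fin N)) 1) → ℝ → ℝ≥0∞ := fun y r =>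
    Set.indicator (Set.Ici 1) (fun t => ENNReal.ofReal ((1 + t ^ 2) ^ s * ‖v t y‖ ^ 2)) r with hg
  have hgm : Measurable fun p :
      (Metric.sphere (0 : EuclideanSpace ℝ (Fin N)) 1) × ℝ => g p.1 p.2 := by
    have heq : (fun p : (Metric.sphere (0 : EuclideanSpace ℝ (Fin N)) 1) × ℝ => g p.1 p.2) =
        Set.indicator (Prod.snd ⁻¹' Set.Ici (1:ℝ))
          (fun p => ENNReal.ofReal ((1 + p.2 ^ 2) ^ s * ‖v p.2 p.1‖ ^ 2)) := by
      funext p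
      by_cases hp : (1:ℝ) ≤ p.2
      · rw [show g p.1 p.2 = Set.indicator (Set.Ici 1)
            (fun t => ENNReal.ofReal ((1 + t ^ 2) ^ s * ‖v t p.1‖ ^ 2)) p.2 from rfl,
          Set.indicator_of_mem (by exact hp), Set.indicator_of_mem (by exact hp)]
      · rw [show g p.1 p.2 = Set.indicator (Set.Ici 1)
            (fun t => ENNReal.ofReal ((1 + t ^ 2) ^ s * ‖v t p.1‖ ^ 2)) p.2 from rfl,
          Set.indicator_of_notMem (by exact hp), Set.indicator_of_notMem (by exact hp)]
    rw [heq]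
    exact Measurable.indicator
      (((by fun_prop : Measurable fun p :
          (Metric.sphere (0 : EuclideanSpace ℝ (Fin N)) 1) × ℝ => (1 + p.2 ^ 2) ^ s).mul
        (hvmeas.norm.pow_const 2)).ennreal_ofReal)
      (measurable_snd measurableSet_Ici)
  have key : (∫⁻ x in {x : EuclideanSpace ℝ (Fin N) | 1 ≤ ‖x‖},
        ENNReal.ofReal ((1 + ‖x‖ ^ 2) ^ s * ‖f x‖ ^ 2))
      = ∫⁻ r in Set.Ici (1:ℝ),
          ENNReal.ofReal (r ^ (N-1:ℕ)) * (ENNReal.ofReal ((1 + r ^ 2) ^ s) * Ψ r) := by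
    have hG : ∀ (x : EuclideanSpace ℝ (Fin N)) (hx : x ≠ 0),
        Set.indicator {x : EuclideanSpace ℝ (Fin N) | 1 ≤ ‖x‖}
          (fun x => ENNReal.ofReal ((1 + ‖x‖ ^ 2) ^ s * ‖f x‖ ^ 2)) x
          = g (sphereProj x hx) ‖x‖ := by
      intro x hx
      by_cases hmem : 1 ≤ ‖x‖
      · rw [Set.indicator_of_mem (by exact hmem),
          show g (sphereProj x hx) ‖x‖ = Set.indicator (Set.Ici 1)
            (fun t => ENNReal.ofReal ((1 + t ^ 2) ^ s * ‖v t (sphereProj x hx)‖ ^ 2)) ‖x‖ from rfl,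
          Set.indicator_of_mem (by exact hmem)]
        rw [hf x hx]
      · rw [Set.indicator_of_notMem (by exact hmem),
          show g (sphereProj x hx) ‖x‖ = Set.indicator (Set.Ici 1)
            (fun t => ENNReal.ofReal ((1 + t ^ 2) ^ s * ‖v t (sphereProj x hx)‖ ^ 2)) ‖x‖ from rfl,
          Set.indicator_of_notMem (by exact hmem)]
    rw [← lintegral_indicator hAone]
    rw [polar_master hN g hgm _ hG, ← hω]
    have hstep : ∀ r : ℝ, ENNReal.ofReal (r ^ (N-1:ℕ)) * ∫⁻ y, g y r ∂ω
        = Set.indicator (Set.Ici (1:ℝ))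
            (fun r => ENNReal.ofReal (r ^ (N-1:ℕ)) *
              (ENNReal.ofReal ((1 + r ^ 2) ^ s) * Ψ r)) r := by
      intro r
      by_cases hr : (1:ℝ) ≤ r
      · rw [Set.indicator_of_mem (by exact hr)]
        congr 1
        have hgy : ∀ y, g y r
            = ENNReal.ofReal ((1 + r ^ 2) ^ s) * ENNReal.ofReal (‖v r y‖ ^ 2) := by
          intro y
          rw [show g y r = Set.indicator (Set.Ici 1)
              (fun t => ENNReal.ofReal ((1 + t ^ 2) ^ s * ‖v t y‖ ^ 2)) r from rfl,
            Set.indicator_of_mem (by exact hr), ENNReal.ofReal_mul (by positivity)]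
        rw [lintegral_congr hgy, lintegral_const_mul' _ _ ENNReal.ofReal_ne_top]
      · rw [Set.indicator_of_notMem (by exact hr)]
        have hgy : ∀ y, g y r = (0:ℝ≥0∞) := by
          intro y
          rw [show g y r = Set.indicator (Set.Ici 1)
              (fun t => ENNReal.ofReal ((1 + t ^ 2) ^ s * ‖v t y‖ ^ 2)) r from rfl,
            Set.indicator_of_notMem (by exact hr)]
        rw [lintegral_congr hgy, lintegral_zero, mul_zero]
    have hinter : Set.Ici (1:ℝ) ∩ Set.Ioi 0 = Set.Ici 1 :=
      Set.inter_eq_left.mpr fun r (hr : (1:ℝ) ≤ r) => (lt_of_lt_of_le one_pos hr : (0:ℝ) < r)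
    rw [lintegral_congr hstep, lintegral_indicator measurableSet_Ici,
      Measure.restrict_restrict measurableSet_Ici, hinter]
  constructor
  · -- finiteness implies vanishing of high coefficients
    intro hfin i₀ hge
    by_contra hc0
    rw [key] at hfin
    set Tset := Finset.univ.filter (fun j : Fin n => c j ≠ 0) with hTset
    have hTne : Tset.Nonempty := ⟨i₀, by simp [hTset, hc0]⟩
    set T := Tset.max' hTne with hT
    have hcT : c T ≠ 0 := (Finset.mem_filter.mp (Tset.max'_mem hTne)).2
    have hmaxT : ∀ j, c j ≠ 0 → j ≤ T := fun j hj =>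
      Finset.le_max' _ j (by simp [hTset, hj])
    have hhT : -s - N / 2 ≤ h T := le_trans hge (hmono.monotone (hmaxT i₀ hc0))
    set k : Fin n → ℝ := fun i => (K i).toReal with hk
    have hKi : ∀ i, K i = ENNReal.ofReal (k i) := fun i =>
      (ENNReal.ofReal_toReal (hKfin i).ne).symm
    have hk0 : ∀ i, 0 ≤ k i := fun i => ENNReal.toReal_nonneg
    have hkT : 0 < k T := ENNReal.toReal_pos (hKpos T).ne' (hKfin T).ne
    set β : Fin n → ℝ := fun i => ‖c i‖ * Real.sqrt (k i) with hβ
    have hβ0 : ∀ i, 0 ≤ β i := fun i => mul_nonneg (norm_nonneg _) (Real.sqrt_nonneg _)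
    have hβT : 0 < β T := mul_pos (norm_pos_iff.mpr hcT) (Real.sqrt_pos.mpr hkT)
    have hterm : ∀ (i : Fin n) (r : ℝ), 0 < r →
        (∫⁻ y, (ENNReal.ofReal ‖c i * ((r ^ h i : ℝ):ℂ) * u i y‖) ^ (2:ℝ) ∂ω) ^ (1/(2:ℝ))
          = ENNReal.ofReal (β i * r ^ h i) := by
      intro i r hr
      have h1 : ∀ y : Metric.sphere (0 : EuclideanSpace ℝ (Fin N)) 1,
          (ENNReal.ofReal ‖c i * ((r ^ h i : ℝ):ℂ) * u i y‖) ^ (2:ℝ)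
            = ENNReal.ofReal ((‖c i‖ * r ^ h i)^2) * ENNReal.ofReal (‖u i y‖^2) := by
        intro y
        rw [helper1 (norm_nonneg _), norm_mul, norm_mul, Complex.norm_real, Real.norm_eq_abs,
          abs_of_nonneg (Real.rpow_nonneg hr.le _), mul_pow, ← ENNReal.ofReal_mul (by positivity)]
      rw [lintegral_congr h1, lintegral_const_mul' _ _ ENNReal.ofReal_ne_top]
      rw [show (∫⁻ y, ENNReal.ofReal (‖u i y‖^2) ∂ω) = K i from rfl, hKi i,
        ← ENNReal.ofReal_mul (by positivity)]
      have hkk : (‖c i‖ * r ^ h i) ^ 2 * k i = (β i * r ^ h i)^2 := by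
        have hsq : Real.sqrt (k i) ^ 2 = k i := Real.sq_sqrt (hk0 i)
        rw [show β i = ‖c i‖ * Real.sqrt (k i) from rfl]
        linear_combination (-((‖c i‖ * r ^ h i) ^ 2)) * hsq
      rw [hkk, helper2 (by positivity)]
    have hΨeq : ∀ r : ℝ, Ψ r = ∫⁻ y, (ENNReal.ofReal ‖v r y‖) ^ (2:ℝ) ∂ω := fun r =>
      lintegral_congr fun y => (helper1 (norm_nonneg _)).symm
    have hmink : ∀ r : ℝ, 0 < r →
        ENNReal.ofReal (β T * r ^ h T) ≤ (Ψ r) ^ (1/(2:ℝ))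
          + ∑ i ∈ Finset.univ.erase T, ENNReal.ofReal (β i * r ^ h i) := by
      intro r hr
      have hpt : ∀ y, ENNReal.ofReal ‖c T * ((r ^ h T : ℝ):ℂ) * u T y‖
          ≤ ENNReal.ofReal ‖v r y‖
            + ∑ i ∈ Finset.univ.erase T, ENNReal.ofReal ‖c i * ((r ^ h i : ℝ):ℂ) * u i y‖ := by
        intro y
        have hre : ‖c T * ((r ^ h T : ℝ):ℂ) * u T y‖ ≤ ‖v r y‖
            + ∑ i ∈ Finset.univ.erase T, ‖c i * ((r ^ h i : ℝ):ℂ) * u i y‖ := by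
          have hsp : c T * ((r ^ h T : ℝ):ℂ) * u T y
              = v r y - ∑ i ∈ Finset.univ.erase T, c i * ((r ^ h i : ℝ):ℂ) * u i y := by
            rw [show v r y = ∑ i, c i * ((r ^ h i : ℝ):ℂ) * u i y from rfl,
              ← Finset.add_sum_erase _ _ (Finset.mem_univ T)]
            ring
          rw [hsp]
          exact (norm_sub_le _ _).trans (by gcongr; exact norm_sum_le _ _)
        calc ENNReal.ofReal ‖c T * ((r ^ h T : ℝ):ℂ) * u T y‖
            ≤ ENNReal.ofReal (‖v r y‖
              + ∑ i ∈ Finset.univ.erase T, ‖c i * ((r ^ h i : ℝ):ℂ) * u i y‖) :=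
              ENNReal.ofReal_le_ofReal hre
          _ = _ := by
              rw [ENNReal.ofReal_add (norm_nonneg _)
                (Finset.sum_nonneg fun i _ => norm_nonneg _),
                ENNReal.ofReal_sum_of_nonneg (fun i _ => norm_nonneg _)]
      have meas1 : Measurable fun y => ENNReal.ofReal ‖v r y‖ :=
        ((hvmeas.comp (measurable_id.prodMk measurable_const)).norm).ennreal_ofReal
      have measi : ∀ i : Fin n, Measurable fun y :
          Metric.sphere (0 : EuclideanSpace ℝ (Fin N)) 1 =>
          ENNReal.ofReal ‖c i * ((r ^ h i : ℝ):ℂ) * u i y‖ := fun i =>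
        (((humeas i).const_mul (c i * ((r ^ h i : ℝ):ℂ))).norm).ennreal_ofReal
      calc ENNReal.ofReal (β T * r ^ h T)
          = (∫⁻ y, (ENNReal.ofReal ‖c T * ((r ^ h T : ℝ):ℂ) * u T y‖) ^ (2:ℝ) ∂ω) ^ (1/(2:ℝ)) :=
            (hterm T r hr).symm
        _ ≤ (∫⁻ y, (ENNReal.ofReal ‖v r y‖
              + ∑ i ∈ Finset.univ.erase T,
                ENNReal.ofReal ‖c i * ((r ^ h i : ℝ):ℂ) * u i y‖) ^ (2:ℝ) ∂ω) ^ (1/(2:ℝ)) := by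
            refine ENNReal.rpow_le_rpow ?_ (by norm_num)
            exact lintegral_mono fun y => ENNReal.rpow_le_rpow (hpt y) (by norm_num)
        _ ≤ (∫⁻ y, (ENNReal.ofReal ‖v r y‖) ^ (2:ℝ) ∂ω) ^ (1/(2:ℝ))
            + (∫⁻ y, (∑ i ∈ Finset.univ.erase T,
                ENNReal.ofReal ‖c i * ((r ^ h i : ℝ):ℂ) * u i y‖) ^ (2:ℝ) ∂ω) ^ (1/(2:ℝ)) :=
            ENNReal.lintegral_Lp_add_le meas1.aemeasurable
              (Finset.measurable_sum _ fun i _ => measi i).aemeasurable one_le_two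
        _ ≤ (Ψ r) ^ (1/(2:ℝ)) + ∑ i ∈ Finset.univ.erase T,
              (∫⁻ y, (ENNReal.ofReal ‖c i * ((r ^ h i : ℝ):ℂ) * u i y‖) ^ (2:ℝ) ∂ω) ^ (1/(2:ℝ)) := by
            rw [hΨeq r]
            exact add_le_add_right (mink ω _ _ measi) _
        _ = (Ψ r) ^ (1/(2:ℝ)) + ∑ i ∈ Finset.univ.erase T, ENNReal.ofReal (β i * r ^ h i) := by
            congr 1
            exact Finset.sum_congr rfl fun i _ => hterm i r hr
    have htend : Filter.Tendsto (fun r : ℝ => ∑ i ∈ Finset.univ.erase T, β i * r ^ (h i - h T))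
        Filter.atTop (nhds 0) := by
      have hterms : ∀ i ∈ Finset.univ.erase T,
          Filter.Tendsto (fun r : ℝ => β i * r ^ (h i - h T)) Filter.atTop (nhds 0) := by
        intro i hi
        by_cases hci : c i = 0
        · have hb0 : β i = 0 := by
            rw [show β i = ‖c i‖ * Real.sqrt (k i) from rfl, hci]
            simp
          simpa [hb0] using (tendsto_const_nhds :
            Filter.Tendsto (fun _ : ℝ => (0:ℝ)) Filter.atTop (nhds 0))
        · have hiT : h i < h T :=
            hmono (lt_of_le_of_ne (hmaxT i hci) (Finset.ne_of_mem_erase hi))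
          have hexp : (fun r : ℝ => β i * r ^ (h i - h T))
              = fun r : ℝ => β i * r ^ (-(h T - h i)) := by
            funext r; congr 1; ring
          rw [hexp]
          simpa using (tendsto_rpow_neg_atTop (by linarith : 0 < h T - h i)).const_mul (β i)
      simpa using tendsto_finset_sum _ hterms
    obtain ⟨R₀, hR₀⟩ := Filter.eventually_atTop.mp
      (htend.eventually (eventually_le_nhds (half_pos hβT)))
    set R := max R₀ 1 with hRdef
    have hR1 : (1:ℝ) ≤ R := le_max_right _ _
    have hΨlb : ∀ r : ℝ, R ≤ r → ENNReal.ofReal ((β T / 2 * r ^ h T) ^ 2) ≤ Ψ r := by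
      intro r hrR
      have hr1 : (1:ℝ) ≤ r := le_trans hR1 hrR
      have hr0 : (0:ℝ) < r := lt_of_lt_of_le one_pos hr1
      have hsum : ∑ i ∈ Finset.univ.erase T, β i * r ^ h i ≤ β T / 2 * r ^ h T := by
        have h1 := hR₀ r (le_trans (le_max_left _ _) hrR)
        have h2 : ∑ i ∈ Finset.univ.erase T, β i * r ^ h i
            = (∑ i ∈ Finset.univ.erase T, β i * r ^ (h i - h T)) * r ^ h T := by
          rw [Finset.sum_mul]
          refine Finset.sum_congr rfl fun i _ => ?_
          have hra : r ^ (h i - h T) * r ^ h T = r ^ h i := by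
            rw [← Real.rpow_add hr0, sub_add_cancel]
          rw [mul_assoc (β i) (r ^ (h i - h T)) (r ^ h T), hra]
        rw [h2]
        exact mul_le_mul_of_nonneg_right h1 (Real.rpow_nonneg hr0.le _)
      have hsum' : ∑ i ∈ Finset.univ.erase T, ENNReal.ofReal (β i * r ^ h i)
          ≤ ENNReal.ofReal (β T / 2 * r ^ h T) := by
        rw [← ENNReal.ofReal_sum_of_nonneg
          (fun i _ => mul_nonneg (hβ0 i) (Real.rpow_nonneg hr0.le _))]
        exact ENNReal.ofReal_le_ofReal hsum
      have hM2 : ENNReal.ofReal (β T * r ^ h T)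
          ≤ Ψ r ^ (1/(2:ℝ)) + ENNReal.ofReal (β T / 2 * r ^ h T) :=
        le_trans (hmink r hr0) (add_le_add_right hsum' _)
      have hsplit2 : ENNReal.ofReal (β T * r ^ h T)
          = ENNReal.ofReal (β T / 2 * r ^ h T) + ENNReal.ofReal (β T / 2 * r ^ h T) := by
        rw [← ENNReal.ofReal_add (by positivity) (by positivity)]
        congr 1; ring
      have hhalf : ENNReal.ofReal (β T / 2 * r ^ h T) ≤ Ψ r ^ (1/(2:ℝ)) := by
        rw [hsplit2] at hM2
        exact (ENNReal.add_le_add_iff_right ENNReal.ofReal_ne_top).mp hM2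
      calc ENNReal.ofReal ((β T / 2 * r ^ h T) ^ 2)
          = (ENNReal.ofReal (β T / 2 * r ^ h T)) ^ (2:ℝ) := (helper1 (by positivity)).symm
        _ ≤ (Ψ r ^ (1/(2:ℝ))) ^ (2:ℝ) := ENNReal.rpow_le_rpow hhalf (by norm_num)
        _ = Ψ r := by rw [← ENNReal.rpow_mul]; norm_num
    have hee : (-1:ℝ) ≤ 2*s + 2*h T + ((N:ℝ) - 1) := by
      have : (0:ℝ) < N := by positivity
      linarith [hhT]
    have hC0 : (0:ℝ) < min 1 (2^s) * (β T / 2)^2 :=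
      mul_pos (lt_min one_pos (Real.rpow_pos_of_pos two_pos s)) (by positivity)
    have hbig : (⊤:ℝ≥0∞) ≤ ∫⁻ r in Set.Ici (1:ℝ),
        ENNReal.ofReal (r ^ (N-1:ℕ)) * (ENNReal.ofReal ((1 + r ^ 2) ^ s) * Ψ r) := by
      calc (⊤:ℝ≥0∞)
          = ENNReal.ofReal (min 1 (2^s) * (β T / 2)^2)
              * ∫⁻ r in Set.Ici R, ENNReal.ofReal (r ^ (2*s + 2*h T + ((N:ℝ) - 1))) := by
            rw [lint_rpow_eq_top hee hR1, ENNReal.mul_top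
              (by simpa [ENNReal.ofReal_eq_zero, not_le] using hC0)]
        _ = ∫⁻ r in Set.Ici R, ENNReal.ofReal
              (min 1 (2^s) * (β T / 2)^2 * r ^ (2*s + 2*h T + ((N:ℝ) - 1))) := by
            rw [← lintegral_const_mul' _ _ ENNReal.ofReal_ne_top]
            exact lintegral_congr fun r => (ENNReal.ofReal_mul hC0.le).symm
        _ ≤ ∫⁻ r in Set.Ici R,
              ENNReal.ofReal (r ^ (N-1:ℕ)) * (ENNReal.ofReal ((1 + r ^ 2) ^ s) * Ψ r) := by
            apply lintegral_mono_ae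
            filter_upwards [ae_restrict_mem measurableSet_Ici] with r hrR
            have hr1 : (1:ℝ) ≤ r := le_trans hR1 hrR
            have hr0 : (0:ℝ) < r := lt_of_lt_of_le one_pos hr1
            calc ENNReal.ofReal (min 1 (2^s) * (β T / 2)^2 * r ^ (2*s + 2*h T + ((N:ℝ) - 1)))
                = ENNReal.ofReal (r ^ (N-1:ℕ)) * (ENNReal.ofReal (min 1 (2^s) * r ^ (2*s))
                    * ENNReal.ofReal ((β T / 2 * r ^ h T) ^ 2)) := by
                  rw [← ENNReal.ofReal_mul
                      (by positivity : (0:ℝ) ≤ min 1 (2^s) * r ^ (2*s)),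
                    ← ENNReal.ofReal_mul (by positivity : (0:ℝ) ≤ r ^ (N-1:ℕ))]
                  congr 1
                  rw [← hcoll (h T) r hr0]
                  ring
              _ ≤ ENNReal.ofReal (r ^ (N-1:ℕ)) * (ENNReal.ofReal ((1 + r ^ 2) ^ s) * Ψ r) := by
                  exact mul_le_mul_right (mul_le_mul'
                    (ENNReal.ofReal_le_ofReal (weight_lower hr1)) (hΨlb r hrR)) _
        _ ≤ ∫⁻ r in Set.Ici (1:ℝ),
              ENNReal.ofReal (r ^ (N-1:ℕ)) * (ENNReal.ofReal ((1 + r ^ 2) ^ s) * Ψ r) :=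
            lintegral_mono_set (Set.Ici_subset_Ici.mpr hR1)
    exact (not_lt.mpr hbig) hfin
  · -- vanishing of high coefficients implies finiteness
    intro hc
    rw [key]
    have hΨle : ∀ r : ℝ, 1 ≤ r →
        Ψ r ≤ ∑ i, ENNReal.ofReal ((n:ℝ) * (‖c i‖ * r ^ h i) ^ 2) * K i := by
      intro r hr
      have hr0 : (0:ℝ) ≤ r := le_trans zero_le_one hr
      have hpt : ∀ y, ‖v r y‖ ^ 2
          ≤ ∑ i, (n:ℝ) * (‖c i‖ * r ^ h i) ^ 2 * ‖u i y‖ ^ 2 := by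
        intro y
        have h1 : ‖v r y‖ ≤ ∑ i, ‖c i‖ * r ^ h i * ‖u i y‖ := by
          rw [show v r y = ∑ i, c i * ((r ^ h i : ℝ):ℂ) * u i y from rfl]
          refine (norm_sum_le _ _).trans (le_of_eq (Finset.sum_congr rfl fun i _ => ?_))
          rw [norm_mul, norm_mul, Complex.norm_real, Real.norm_eq_abs,
            abs_of_nonneg (Real.rpow_nonneg hr0 _)]
        calc ‖v r y‖ ^ 2 ≤ (∑ i, ‖c i‖ * r ^ h i * ‖u i y‖) ^ 2 := by
              apply pow_le_pow_left₀ (norm_nonneg _) h1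
          _ ≤ ((Finset.univ : Finset (Fin n)).card : ℝ)
                * ∑ i, (‖c i‖ * r ^ h i * ‖u i y‖) ^ 2 := sq_sum_le_card_mul_sum_sq
          _ = ∑ i, (n:ℝ) * (‖c i‖ * r ^ h i) ^ 2 * ‖u i y‖ ^ 2 := by
              rw [Finset.card_univ, Fintype.card_fin, Finset.mul_sum]
              exact Finset.sum_congr rfl fun i _ => by ring
      calc Ψ r ≤ ∫⁻ y, ENNReal.ofReal
            (∑ i, (n:ℝ) * (‖c i‖ * r ^ h i) ^ 2 * ‖u i y‖ ^ 2) ∂ω :=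
            lintegral_mono fun y => ENNReal.ofReal_le_ofReal (hpt y)
        _ = ∑ i, ENNReal.ofReal ((n:ℝ) * (‖c i‖ * r ^ h i) ^ 2) * K i := by
            have hsum : ∀ y : Metric.sphere (0 : EuclideanSpace ℝ (Fin N)) 1,
                ENNReal.ofReal (∑ i, (n:ℝ) * (‖c i‖ * r ^ h i) ^ 2 * ‖u i y‖ ^ 2)
                = ∑ i, ENNReal.ofReal ((n:ℝ) * (‖c i‖ * r ^ h i) ^ 2)
                    * ENNReal.ofReal (‖u i y‖ ^ 2) := by
              intro y
              rw [ENNReal.ofReal_sum_of_nonneg (fun i _ => by positivity)]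
              exact Finset.sum_congr rfl fun i _ => ENNReal.ofReal_mul (by positivity)
            rw [lintegral_congr hsum, lintegral_finset_sum _ (fun i _ =>
              ((humeas i).norm.pow_const 2).ennreal_ofReal.const_mul _)]
            exact Finset.sum_congr rfl fun i _ =>
              lintegral_const_mul' _ _ ENNReal.ofReal_ne_top
    calc ∫⁻ r in Set.Ici (1:ℝ),
          ENNReal.ofReal (r ^ (N-1:ℕ)) * (ENNReal.ofReal ((1 + r ^ 2) ^ s) * Ψ r)
        ≤ ∫⁻ r in Set.Ici (1:ℝ), ∑ i, ENNReal.ofReal (r ^ (N-1:ℕ)) *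
            (ENNReal.ofReal ((1 + r ^ 2) ^ s)
              * (ENNReal.ofReal ((n:ℝ) * (‖c i‖ * r ^ h i) ^ 2) * K i)) := by
          apply lintegral_mono_ae
          filter_upwards [ae_restrict_mem measurableSet_Ici] with r hr
          calc ENNReal.ofReal (r ^ (N-1:ℕ)) * (ENNReal.ofReal ((1 + r ^ 2) ^ s) * Ψ r)
              ≤ ENNReal.ofReal (r ^ (N-1:ℕ)) * (ENNReal.ofReal ((1 + r ^ 2) ^ s)
                  * ∑ i, ENNReal.ofReal ((n:ℝ) * (‖c i‖ * r ^ h i) ^ 2) * K i) :=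
                mul_le_mul_right (mul_le_mul_right (hΨle r hr) _) _
            _ = ∑ i, ENNReal.ofReal (r ^ (N-1:ℕ)) * (ENNReal.ofReal ((1 + r ^ 2) ^ s)
                  * (ENNReal.ofReal ((n:ℝ) * (‖c i‖ * r ^ h i) ^ 2) * K i)) := by
                simp only [Finset.mul_sum]
      _ = ∑ i, ∫⁻ r in Set.Ici (1:ℝ), ENNReal.ofReal (r ^ (N-1:ℕ)) *
            (ENNReal.ofReal ((1 + r ^ 2) ^ s)
              * (ENNReal.ofReal ((n:ℝ) * (‖c i‖ * r ^ h i) ^ 2) * K i)) := by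
          refine lintegral_finset_sum _ (fun i _ => ?_)
          apply Measurable.mul
          · fun_prop
          · apply Measurable.mul
            · fun_prop
            · exact (Measurable.ennreal_ofReal (by fun_prop)).mul measurable_const
      _ < ⊤ := by
          refine ENNReal.sum_lt_top.mpr fun i _ => ?_
          by_cases hci : c i = 0
          · simp [hci]
          · have hhi : h i < -s - N / 2 := lt_of_not_ge fun hcon => hci (hc i hcon)
            have hei : 2*s + 2*h i + ((N:ℝ) - 1) < -1 := by linarith
            have hb : ∀ r ∈ Set.Ici (1:ℝ),
                ENNReal.ofReal (r ^ (N-1:ℕ)) * (ENNReal.ofReal ((1 + r ^ 2) ^ s)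
                  * (ENNReal.ofReal ((n:ℝ) * (‖c i‖ * r ^ h i) ^ 2) * K i))
                ≤ ENNReal.ofReal ((max 1 (2^s) * ((n:ℝ) * ‖c i‖^2))
                    * r ^ (2*s + 2*h i + ((N:ℝ) - 1))) * K i := by
              intro r hr
              have hr1 : (1:ℝ) ≤ r := hr
              have hr0 : (0:ℝ) < r := lt_of_lt_of_le one_pos hr1
              have hreal : r ^ (N-1:ℕ) * ((1 + r ^ 2) ^ s * ((n:ℝ) * (‖c i‖ * r ^ h i) ^ 2))
                  ≤ (max 1 (2^s) * ((n:ℝ) * ‖c i‖^2)) * r ^ (2*s + 2*h i + ((N:ℝ) - 1)) := by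
                calc r ^ (N-1:ℕ) * ((1 + r ^ 2) ^ s * ((n:ℝ) * (‖c i‖ * r ^ h i) ^ 2))
                    ≤ r ^ (N-1:ℕ) * ((max 1 (2^s) * r ^ (2*s))
                        * ((n:ℝ) * (‖c i‖ * r ^ h i) ^ 2)) := by
                      apply mul_le_mul_of_nonneg_left _ (by positivity)
                      exact mul_le_mul_of_nonneg_right (weight_upper hr1) (by positivity)
                  _ = (max 1 (2^s) * ((n:ℝ) * ‖c i‖^2)) * r ^ (2*s + 2*h i + ((N:ℝ) - 1)) := by
                      rw [← hcoll (h i) r hr0]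
                      ring
              calc ENNReal.ofReal (r ^ (N-1:ℕ)) * (ENNReal.ofReal ((1 + r ^ 2) ^ s)
                    * (ENNReal.ofReal ((n:ℝ) * (‖c i‖ * r ^ h i) ^ 2) * K i))
                  = ENNReal.ofReal (r ^ (N-1:ℕ) * ((1 + r ^ 2) ^ s
                      * ((n:ℝ) * (‖c i‖ * r ^ h i) ^ 2))) * K i := by
                    rw [ENNReal.ofReal_mul (by positivity : (0:ℝ) ≤ r ^ (N-1:ℕ)),
                      ENNReal.ofReal_mul (by positivity : (0:ℝ) ≤ (1 + r ^ 2) ^ s)]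
                    ring
                _ ≤ ENNReal.ofReal ((max 1 (2^s) * ((n:ℝ) * ‖c i‖^2))
                      * r ^ (2*s + 2*h i + ((N:ℝ) - 1))) * K i :=
                    mul_le_mul_left (ENNReal.ofReal_le_ofReal hreal) _
            calc ∫⁻ r in Set.Ici (1:ℝ), ENNReal.ofReal (r ^ (N-1:ℕ)) *
                  (ENNReal.ofReal ((1 + r ^ 2) ^ s)
                    * (ENNReal.ofReal ((n:ℝ) * (‖c i‖ * r ^ h i) ^ 2) * K i))
                ≤ ∫⁻ r in Set.Ici (1:ℝ), ENNReal.ofReal ((max 1 (2^s) * ((n:ℝ) * ‖c i‖^2))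
                    * r ^ (2*s + 2*h i + ((N:ℝ) - 1))) * K i := by
                  apply lintegral_mono_ae
                  filter_upwards [ae_restrict_mem measurableSet_Ici] with r hr
                  exact hb r hr
              _ = (ENNReal.ofReal (max 1 (2^s) * ((n:ℝ) * ‖c i‖^2)) * K i)
                    * ∫⁻ r in Set.Ici (1:ℝ),
                        ENNReal.ofReal (r ^ (2*s + 2*h i + ((N:ℝ) - 1))) := by
                  rw [← lintegral_const_mul' _ _
                    (ENNReal.mul_ne_top ENNReal.ofReal_ne_top (hKfin i).ne)]
                  refine lintegral_congr fun r => ?_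
                  rw [ENNReal.ofReal_mul (by positivity)]
                  ring
              _ < ⊤ := ENNReal.mul_lt_top
                  (ENNReal.mul_lt_top ENNReal.ofReal_lt_top (hKfin i))
                  (lint_rpow_lt_top hei)

end
end

section
/- Let N ≥ 2 be a natural number, F a finite-dimensional real normed vector space, s, h ∈ ℝ, m ∈ ℕ, and let f : ℝ^N → F be smooth away from 0 and positively homogeneous of degree h, with f not vanishing identically on the unit sphere. Then the following are equivalent: (i) ∫_{A_1} (1+‖x‖²)^s ‖f(x)‖² dx < ∞; (ii) for every j ≤ m, ∫_{A_1} (1+‖x‖²)^s ‖D^j f(x)‖² dx < ∞; (iii) h < −s − N/2. (This is the characterization of Remark 2.5: for a smooth homogeneous field, membership in L²_s(A_1) is equivalent to membership in the weighted Sobolev space H^m_s(A_1) of any order m, and both are equivalent to h < −s − N/2.) -/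
set_option maxHeartbeats 1000000

open MeasureTheory Set Metric Module ENNReal Pointwise


/-- comparison of rpow under two-sided ratio bounds -/
lemma rpow_ratio_le {x y K : ℝ} (hx : 0 < x) (hy : 0 < y) (hK : 1 ≤ K)
    (h1 : x ≤ K * y) (h2 : y ≤ K * x) (s : ℝ) : x ^ s ≤ K ^ |s| * y ^ s := by
  have hK0 : 0 < K := lt_of_lt_of_le one_pos hK
  rcases le_or_gt 0 s with hs | hs
  · calc x ^ s ≤ (K * y) ^ s := Real.rpow_le_rpow hx.le h1 hs
      _ = K ^ s * y ^ s := Real.mul_rpow hK0.le hy.le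
      _ ≤ K ^ |s| * y ^ s :=
          mul_le_mul_of_nonneg_right (Real.rpow_le_rpow_of_exponent_le hK (le_abs_self s))
            (Real.rpow_pos_of_pos hy s).le
  · have hyx : y / K ≤ x := by rw [div_le_iff₀ hK0]; linarith [h2]
    have : x ^ s ≤ (y / K) ^ s :=
      Real.rpow_le_rpow_of_nonpos (by positivity) hyx hs.le
    calc x ^ s ≤ (y / K) ^ s := this
      _ = y ^ s / K ^ s := Real.div_rpow hy.le hK0.le s
      _ = K ^ (-s) * y ^ s := by rw [Real.rpow_neg hK0.le]; ring
      _ = K ^ |s| * y ^ s := by rw [abs_of_neg hs]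

lemma lintegral_smul_set {N : ℕ} (c : ℝ) (hc : 0 < c)
    (A : Set (EuclideanSpace ℝ (Fin N))) (hA : MeasurableSet A)
    (G : EuclideanSpace ℝ (Fin N) → ℝ≥0∞) :
    ∫⁻ x in c • A, G x = ENNReal.ofReal (c ^ N) * ∫⁻ y in A, G (c • y) := by
  have hc0 : c ≠ 0 := hc.ne'
  let e : EuclideanSpace ℝ (Fin N) ≃ᵐ EuclideanSpace ℝ (Fin N) := (Homeomorph.smulOfNeZero c hc0).toMeasurableEquiv
  have he : ∀ y : EuclideanSpace ℝ (Fin N), e y = c • y := fun y => rfl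
  have hmap : Measure.map e volume = ENNReal.ofReal (c ^ N)⁻¹ • volume := by
    ext s hs
    rw [Measure.map_apply e.measurable hs, Measure.smul_apply, smul_eq_mul]
    have hpre : e ⁻¹' s = c⁻¹ • s := Set.preimage_smul₀ hc0 s
    rw [show e ⁻¹' s = c⁻¹ • s from hpre, Measure.addHaar_smul]
    rw [finrank_euclideanSpace_fin, abs_pow, abs_inv, abs_of_pos hc, inv_pow,
      ENNReal.ofReal_inv_of_pos (by positivity)]
  have hvol : (volume : Measure (EuclideanSpace ℝ (Fin N))) = Measure.map e (ENNReal.ofReal (c ^ N) • volume) := by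
    rw [Measure.map_smul, hmap, smul_smul, ← ENNReal.ofReal_mul (by positivity),
      mul_inv_cancel₀ (by positivity), ENNReal.ofReal_one, one_smul]
  have hmeas_cA : MeasurableSet (c • A) := by
    rw [show c • A = e.symm ⁻¹' A from ?_]
    · exact e.symm.measurable hA
    · ext x
      rw [Set.mem_smul_set_iff_inv_smul_mem₀ hc0]
      rfl
  calc ∫⁻ x in c • A, G x = ∫⁻ x, (c • A).indicator G x := by
        rw [lintegral_indicator hmeas_cA]
    _ = ∫⁻ x, (c • A).indicator G x ∂(Measure.map e (ENNReal.ofReal (c ^ N) • volume)) := by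
        rw [← hvol]
    _ = ∫⁻ y, (c • A).indicator G (c • y) ∂(ENNReal.ofReal (c ^ N) • volume) := by
        rw [lintegral_map_equiv]
        exact lintegral_congr fun y => by rw [he]
    _ = ENNReal.ofReal (c ^ N) * ∫⁻ y, (c • A).indicator G (c • y) := by
        rw [lintegral_smul_measure, smul_eq_mul]
    _ = ENNReal.ofReal (c ^ N) * ∫⁻ y, A.indicator (fun y => G (c • y)) y := by
        congr 1
        apply lintegral_congr
        intro y
        by_cases hy : y ∈ A
        · rw [Set.indicator_of_mem hy, Set.indicator_of_mem (Set.smul_mem_smul_set hy)]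
        · rw [Set.indicator_of_notMem hy, Set.indicator_of_notMem]
          rw [Set.smul_mem_smul_set_iff₀ hc0]
          exact hy
    _ = ENNReal.ofReal (c ^ N) * ∫⁻ y in A, G (c • y) := by
        rw [lintegral_indicator hA]

lemma lintegral_lt_top_hom {N : ℕ} (hN : 1 ≤ N) (s a : ℝ)
    (g : EuclideanSpace ℝ (Fin N) → ℝ)
    (hg : ContinuousOn g {(0 : EuclideanSpace ℝ (Fin N))}ᶜ)
    (hpos : ∀ x, 0 ≤ g x)
    (hhom : ∀ t : ℝ, 0 < t → ∀ x : EuclideanSpace ℝ (Fin N), x ≠ 0 →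
      g (t • x) = t ^ a * g x)
    (hcond : a < -s - N / 2) :
    (∫⁻ x in {x : EuclideanSpace ℝ (Fin N) | 1 ≤ ‖x‖},
      ENNReal.ofReal ((1 + ‖x‖ ^ 2) ^ s * g x ^ 2)) < ⊤ := by
  -- bound on the sphere
  obtain ⟨C, hC⟩ := (isCompact_sphere (0 : EuclideanSpace ℝ (Fin N)) 1).exists_bound_of_continuousOn
    (hg.mono (fun x hx => by
      simp only [mem_sphere_zero_iff_norm] at hx
      simp [Set.mem_compl_iff, Set.mem_singleton_iff]
      intro h0; rw [h0] at hx; simp at hx))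
  set C' : ℝ := max C 1 with hC'
  have hC'0 : 0 < C' := lt_of_lt_of_le one_pos (le_max_right _ _)
  have hCb : ∀ x : EuclideanSpace ℝ (Fin N), ‖x‖ = 1 → g x ≤ C' := by
    intro x hx
    have := hC x (by simp [mem_sphere_zero_iff_norm, hx])
    calc g x ≤ ‖g x‖ := le_abs_self _
      _ ≤ C := this
      _ ≤ C' := le_max_left _ _
  set r : ℝ := -(2 * s + 2 * a) with hr
  have hrN : (N : ℝ) < r := by
    have : (N : ℝ) / 2 ≤ N / 2 := le_refl _
    simp only [hr]; linarith
  set K₀ : ℝ := 4 ^ |s| * 2 ^ |2 * a| * C' ^ 2 with hK₀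
  have hK₀0 : 0 ≤ K₀ := by positivity
  have key : ∀ x : EuclideanSpace ℝ (Fin N), 1 ≤ ‖x‖ →
      (1 + ‖x‖ ^ 2) ^ s * g x ^ 2 ≤ K₀ * (1 + ‖x‖) ^ (-r) := by
    intro x hx
    set R := ‖x‖ with hR
    have hR1 : 1 ≤ R := hx
    have hR0 : 0 < R := lt_of_lt_of_le one_pos hR1
    have hx0 : x ≠ 0 := by
      intro h0; rw [hR, h0, norm_zero] at hR0; exact lt_irrefl _ hR0
    set u : EuclideanSpace ℝ (Fin N) := R⁻¹ • x with hu
    have hu1 : ‖u‖ = 1 := by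
      rw [hu, norm_smul, norm_inv, Real.norm_eq_abs, abs_of_pos hR0, ← hR]
      field_simp
    have hu0 : u ≠ 0 := by
      intro h0; rw [h0] at hu1; simp at hu1
    have hgx : g x = R ^ a * g u := by
      have h1 := hhom R hR0 u hu0
      rw [hu, smul_smul, mul_inv_cancel₀ hR0.ne', one_smul] at h1
      exact h1
    have hgu : g u ≤ C' := hCb u hu1
    -- (1 + R^2)^s ≤ 4^|s| * (1+R)^(2s)
    have e1 : (1 + R ^ 2) ^ s ≤ 4 ^ |s| * (1 + R) ^ (2 * s) := by
      have h1 : (1 + R ^ 2 : ℝ) ≤ 4 * (1 + R) ^ 2 := by nlinarith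
      have h2 : ((1 + R) ^ 2 : ℝ) ≤ 4 * (1 + R ^ 2) := by nlinarith
      have := rpow_ratio_le (x := 1 + R ^ 2) (y := (1 + R) ^ 2)
        (by positivity) (by positivity) (by norm_num) h1 h2 s
      calc (1 + R ^ 2) ^ s ≤ 4 ^ |s| * ((1 + R) ^ 2) ^ s := this
        _ = 4 ^ |s| * (1 + R) ^ (2 * s) := by
            rw [← Real.rpow_natCast (1 + R) 2, ← Real.rpow_mul (by positivity)]
            norm_num
    -- R^(2a)... handle g x ^ 2 = (R^a)^2 * g u ^2 = R^(2a) * gu^2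
    have e2 : g x ^ 2 = R ^ (2 * a) * g u ^ 2 := by
      rw [hgx, mul_pow, ← Real.rpow_natCast (R ^ a) 2, ← Real.rpow_mul hR0.le]
      push_cast
      ring_nf
    have e3 : R ^ (2 * a) ≤ 2 ^ |2 * a| * (1 + R) ^ (2 * a) := by
      have h1 : R ≤ 2 * (1 + R) := by linarith
      have h2 : 1 + R ≤ 2 * R := by linarith
      exact rpow_ratio_le hR0 (by positivity) one_le_two h1 h2 (2 * a)
    have e4 : g u ^ 2 ≤ C' ^ 2 := by
      have := hpos u
      nlinarith
    have e5 : (1 + R) ^ (2 * s) * (1 + R) ^ (2 * a) = (1 + R) ^ (-r) := by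
      rw [← Real.rpow_add (by positivity)]
      congr 1
      rw [hr]; ring
    calc (1 + R ^ 2) ^ s * g x ^ 2
        = (1 + R ^ 2) ^ s * (R ^ (2 * a) * g u ^ 2) := by rw [e2]
      _ ≤ (4 ^ |s| * (1 + R) ^ (2 * s)) * ((2 ^ |2 * a| * (1 + R) ^ (2 * a)) * C' ^ 2) := by
          apply mul_le_mul e1 _ (by positivity) (by positivity)
          apply mul_le_mul e3 e4 (by positivity) (by positivity)
      _ = K₀ * ((1 + R) ^ (2 * s) * (1 + R) ^ (2 * a)) := by rw [hK₀]; ring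
      _ = K₀ * (1 + R) ^ (-r) := by rw [e5]
  calc (∫⁻ x in {x : EuclideanSpace ℝ (Fin N) | 1 ≤ ‖x‖},
      ENNReal.ofReal ((1 + ‖x‖ ^ 2) ^ s * g x ^ 2))
      ≤ ∫⁻ x in {x : EuclideanSpace ℝ (Fin N) | 1 ≤ ‖x‖},
          ENNReal.ofReal (K₀ * (1 + ‖x‖) ^ (-r)) := by
        apply setLIntegral_mono
        · apply Measurable.ennreal_ofReal
          fun_prop
        · intro x hx
          exact ENNReal.ofReal_le_ofReal (key x hx)
    _ ≤ ∫⁻ x : EuclideanSpace ℝ (Fin N), ENNReal.ofReal (K₀ * (1 + ‖x‖) ^ (-r)) :=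
        setLIntegral_le_lintegral _ _
    _ = ENNReal.ofReal K₀ * ∫⁻ x : EuclideanSpace ℝ (Fin N), ENNReal.ofReal ((1 + ‖x‖) ^ (-r)) := by
        rw [← lintegral_const_mul' _ _ ENNReal.ofReal_ne_top]
        exact lintegral_congr fun x => by
          rw [← ENNReal.ofReal_mul hK₀0]
    _ < ⊤ := by
        apply ENNReal.mul_lt_top ENNReal.ofReal_lt_top
        have := finite_integral_one_add_norm
          (E := EuclideanSpace ℝ (Fin N)) (μ := volume) (r := r)
          (by rw [finrank_euclideanSpace_fin]; exact hrN)
        exact this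

lemma lintegral_eq_top_hom {N : ℕ} (hN : 1 ≤ N) (s a : ℝ)
    (g : EuclideanSpace ℝ (Fin N) → ℝ)
    (hg : ContinuousOn g {(0 : EuclideanSpace ℝ (Fin N))}ᶜ)
    (hpos : ∀ x, 0 ≤ g x)
    (hhom : ∀ t : ℝ, 0 < t → ∀ x : EuclideanSpace ℝ (Fin N), x ≠ 0 →
      g (t • x) = t ^ a * g x)
    (hne : ∃ x : EuclideanSpace ℝ (Fin N), ‖x‖ = 1 ∧ g x ≠ 0)
    (hcond : 0 ≤ 2 * a + 2 * s + N) :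
    (∫⁻ x in {x : EuclideanSpace ℝ (Fin N) | 1 ≤ ‖x‖},
      ENNReal.ofReal ((1 + ‖x‖ ^ 2) ^ s * g x ^ 2)) = ⊤ := by
  have hmono : ∀ {p q : ℝ}, p ≤ q → (2:ℝ) ^ p ≤ (2:ℝ) ^ q :=
    fun hpq => Real.rpow_le_rpow_of_exponent_le (by norm_num) hpq
  -- the annuli
  set A : ℕ → Set (EuclideanSpace ℝ (Fin N)) :=
    fun k => (fun x : EuclideanSpace ℝ (Fin N) => ‖x‖) ⁻¹' (Ico ((2:ℝ) ^ k) (2 ^ (k+1))) with hA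
  have hAmem : ∀ k x, x ∈ A k ↔ (2:ℝ) ^ k ≤ ‖x‖ ∧ ‖x‖ < 2 ^ (k+1) := by
    intro k x; rw [hA]; simp [Set.mem_preimage, Set.mem_Ico]
  have hAmeas : ∀ k, MeasurableSet (A k) := by
    intro k
    exact measurable_norm measurableSet_Ico
  have hAuni : (⋃ k, A k) = {x : EuclideanSpace ℝ (Fin N) | 1 ≤ ‖x‖} := by
    ext x
    simp only [Set.mem_iUnion, Set.mem_setOf_eq]
    constructor
    · rintro ⟨k, hk⟩
      rw [hAmem] at hk
      calc (1:ℝ) = 2 ^ 0 := by norm_num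
        _ ≤ 2 ^ k := by exact pow_le_pow_right₀ one_le_two (Nat.zero_le k)
        _ ≤ ‖x‖ := hk.1
    · intro hx
      have hex : ∃ k : ℕ, ‖x‖ < 2 ^ (k + 1) := by
        obtain ⟨k, hk⟩ := pow_unbounded_of_one_lt ‖x‖ (one_lt_two (α := ℝ))
        exact ⟨k, hk.trans_le (pow_le_pow_right₀ one_le_two (Nat.le_succ k))⟩
      set k₀ := Nat.find hex with hk₀
      refine ⟨k₀, (hAmem _ _).2 ⟨?_, Nat.find_spec hex⟩⟩
      rcases Nat.eq_zero_or_pos k₀ with h0 | h0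
      · rw [h0]; simpa using hx
      · obtain ⟨n, hn⟩ := Nat.exists_eq_succ_of_ne_zero h0.ne'
        have := Nat.find_min hex (m := n) (by omega)
        push_neg at this
        rw [hn]
        exact this
  have hAdisj : Pairwise (Function.onFun Disjoint A) := by
    have key : ∀ k l, k < l → Disjoint (A k) (A l) := by
      intro k l hkl
      rw [Set.disjoint_left]
      intro x hxk hxl
      rw [hAmem] at hxk hxl
      have h1 : (2:ℝ) ^ (k+1) ≤ 2 ^ l := pow_le_pow_right₀ one_le_two (by omega)
      linarith [hxk.2, hxl.1]
    intro k l hkl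
    rcases lt_or_gt_of_ne hkl with h | h
    · exact key k l h
    · exact (key l k h).symm
  -- A k = 2^k • A 0
  have hAsmul : ∀ k : ℕ, A k = ((2:ℝ) ^ k) • A 0 := by
    intro k
    have h2k : (0:ℝ) < 2 ^ k := by positivity
    ext x
    rw [Set.mem_smul_set_iff_inv_smul_mem₀ h2k.ne', hAmem, hAmem]
    rw [norm_smul, norm_inv, Real.norm_eq_abs, abs_of_pos h2k]
    constructor
    · rintro ⟨h1, h2⟩
      constructor
      · rw [pow_zero, le_inv_mul_iff₀ h2k, mul_one]; exact h1
      · rw [pow_one, inv_mul_lt_iff₀ h2k]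
        rw [pow_succ] at h2
        linarith
    · rintro ⟨h1, h2⟩
      rw [pow_zero, le_inv_mul_iff₀ h2k, mul_one] at h1
      rw [pow_one, inv_mul_lt_iff₀ h2k] at h2
      exact ⟨h1, by rw [pow_succ]; linarith⟩
  -- positivity of the base integral
  set I₀ : ℝ≥0∞ := ∫⁻ y in A 0, ENNReal.ofReal (g y ^ 2) with hI₀
  have hI₀pos : 0 < I₀ := by
    obtain ⟨x₀, hx₀n, hx₀⟩ := hne
    have hx₀0 : x₀ ≠ 0 := by intro h; rw [h, norm_zero] at hx₀n; norm_num at hx₀n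
    have hgx₀ : 0 < g x₀ := lt_of_le_of_ne (hpos x₀) (Ne.symm hx₀)
    set ε := g x₀ / 2 with hε
    have hε0 : 0 < ε := by positivity
    have hcont : ContinuousAt g x₀ :=
      hg.continuousAt (IsOpen.mem_nhds isOpen_compl_singleton hx₀0)
    have hev : ∀ᶠ y in nhds x₀, ε < g y := hcont.eventually_const_lt (by rw [hε]; linarith)
    obtain ⟨δ, hδ0, hδ⟩ := Metric.eventually_nhds_iff.1 hev
    set η := min (δ/2) (1/2) with hη
    have hη0 : 0 < η := by positivity
    have hη1 : η ≤ 1/2 := min_le_right _ _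
    have hηδ : η ≤ δ/2 := min_le_left _ _
    set z := (1 + η) • x₀ with hz
    have hzx₀ : dist z x₀ = η := by
      rw [dist_eq_norm, hz, show (1 + η) • x₀ - x₀ = η • x₀ by rw [add_smul, one_smul]; abel,
        norm_smul, Real.norm_eq_abs, abs_of_pos hη0, hx₀n, mul_one]
    have hzn : ‖z‖ = 1 + η := by
      rw [hz, norm_smul, Real.norm_eq_abs, abs_of_pos (by linarith), hx₀n, mul_one]
    set ρ := η / 2 with hρ
    have hρ0 : 0 < ρ := by positivity
    have hball : Metric.ball z ρ ⊆ A 0 ∩ Metric.ball x₀ δ := by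
      intro y hy
      rw [Metric.mem_ball] at hy
      have hyz : ‖y - z‖ < ρ := by rw [← dist_eq_norm]; exact hy
      have hny_lb : 1 + η/2 ≤ ‖y‖ := by
        have := norm_sub_norm_le z y
        rw [norm_sub_rev] at hyz
        have h1 : ‖z‖ - ‖y‖ ≤ ‖z - y‖ := norm_sub_norm_le z y
        rw [norm_sub_rev] at h1
        nlinarith [hyz, hzn, h1]
      have hny_ub : ‖y‖ < 2 := by
        have h1 : ‖y‖ ≤ ‖z‖ + ‖y - z‖ := norm_le_insert' y z
        nlinarith [hyz, hzn]
      constructor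
      · rw [hAmem]
        constructor
        · rw [pow_zero]; linarith
        · rw [pow_one]; exact hny_ub
      · rw [Metric.mem_ball]
        calc dist y x₀ ≤ dist y z + dist z x₀ := dist_triangle y z x₀
          _ < ρ + η := by rw [hzx₀]; linarith
          _ ≤ δ := by rw [hρ]; linarith
    calc (0:ℝ≥0∞) < ENNReal.ofReal (ε ^ 2) * volume (Metric.ball z ρ) := by
          apply ENNReal.mul_pos
          · simp [ENNReal.ofReal_pos]; positivity
          · exact (measure_ball_pos volume z hρ0).ne'
      _ = ∫⁻ y in Metric.ball z ρ, ENNReal.ofReal (ε ^ 2) := by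
          rw [setLIntegral_const]
      _ ≤ ∫⁻ y in Metric.ball z ρ, ENNReal.ofReal (g y ^ 2) := by
          apply setLIntegral_mono' measurableSet_ball
          intro y hy
          apply ENNReal.ofReal_le_ofReal
          have h1 : ε < g y := hδ (hball hy).2
          nlinarith [hε0]
      _ ≤ I₀ := lintegral_mono_set (fun y hy => (hball hy).1)
  -- lower bound on each annulus integral
  set c₀ : ℝ≥0∞ := ENNReal.ofReal ((2:ℝ) ^ (-(4*|s|) : ℝ)) with hc₀
  have hc₀0 : c₀ ≠ 0 := by
    rw [hc₀]
    exact (ENNReal.ofReal_pos.mpr (by positivity)).ne'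
  have hIk : ∀ k : ℕ, c₀ * I₀ ≤ ∫⁻ x in A k, ENNReal.ofReal ((1 + ‖x‖ ^ 2) ^ s * g x ^ 2) := by
    intro k
    have h2k : (0:ℝ) < 2 ^ k := by positivity
    -- weight lower bound on A k
    have hw : ∀ x ∈ A k, (2:ℝ) ^ ((2*(k:ℝ)*s - 4*|s|) : ℝ) * g x ^ 2 ≤ (1 + ‖x‖ ^ 2) ^ s * g x ^ 2 := by
      intro x hx
      rw [hAmem] at hx
      apply mul_le_mul_of_nonneg_right _ (by positivity)
      have hxk : (2:ℝ) ^ ((k:ℝ)) ≤ ‖x‖ := by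
        rw [Real.rpow_natCast]; exact hx.1
      have hxk1 : ‖x‖ < (2:ℝ) ^ ((k:ℝ) + 1) := by
        have := hx.2
        rw [show ((k:ℝ) + 1) = ((k + 1 : ℕ) : ℝ) by push_cast; ring, Real.rpow_natCast]
        exact this
      have hsq1 : ((2:ℝ) ^ ((k:ℝ))) ^ 2 = (2:ℝ) ^ (2*(k:ℝ)) := by
        rw [← Real.rpow_natCast ((2:ℝ) ^ ((k:ℝ))) 2, ← Real.rpow_mul (by norm_num)]
        ring_nf
      have hsq2 : ((2:ℝ) ^ ((k:ℝ) + 1)) ^ 2 = (2:ℝ) ^ (2*(k:ℝ) + 2) := by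
        rw [← Real.rpow_natCast ((2:ℝ) ^ ((k:ℝ) + 1)) 2, ← Real.rpow_mul (by norm_num)]
        ring_nf
      have hQ1 : (2:ℝ) ^ (2*(k:ℝ)) ≤ 1 + ‖x‖ ^ 2 := by
        have h5 : ((2:ℝ) ^ ((k:ℝ))) ^ 2 ≤ ‖x‖ ^ 2 :=
          pow_le_pow_left₀ (Real.rpow_nonneg (by norm_num) _) hxk 2
        rw [hsq1] at h5
        linarith
      have hQ2 : 1 + ‖x‖ ^ 2 ≤ (2:ℝ) ^ (2*(k:ℝ)+3) := by
        have h1 : ‖x‖ ^ 2 < (2:ℝ) ^ (2*(k:ℝ)+2) := by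
          rw [← hsq2]
          exact pow_lt_pow_left₀ hxk1 (norm_nonneg x) two_ne_zero
        have h3 : (1:ℝ) ≤ (2:ℝ) ^ (2*(k:ℝ)+2) := by
          calc (1:ℝ) = (2:ℝ) ^ (0:ℝ) := (Real.rpow_zero 2).symm
            _ ≤ _ := hmono (by positivity)
        have h4 : (2:ℝ) ^ (2*(k:ℝ)+3) = 2 * (2:ℝ) ^ (2*(k:ℝ)+2) := by
          rw [show (2*(k:ℝ)+3) = 1 + (2*(k:ℝ)+2) by ring, Real.rpow_add (by norm_num),
            Real.rpow_one]
        linarith [h1, h3]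
      rcases le_or_gt 0 s with hs | hs
      · have step1 : (2:ℝ) ^ ((2*(k:ℝ)*s - 4*|s|) : ℝ) ≤ (2:ℝ) ^ (2*(k:ℝ)*s) := by
          apply hmono
          have : 0 ≤ |s| := abs_nonneg s
          linarith
        have step2 : (2:ℝ) ^ (2*(k:ℝ)*s) = ((2:ℝ) ^ (2*(k:ℝ))) ^ s :=
          Real.rpow_mul (by norm_num) (2*(k:ℝ)) s
        calc (2:ℝ) ^ ((2*(k:ℝ)*s - 4*|s|) : ℝ) ≤ ((2:ℝ) ^ (2*(k:ℝ))) ^ s := by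
              rw [← step2]; exact step1
          _ ≤ (1 + ‖x‖ ^ 2) ^ s := Real.rpow_le_rpow (by positivity) hQ1 hs
      · have step1 : (2:ℝ) ^ ((2*(k:ℝ)*s - 4*|s|) : ℝ) ≤ (2:ℝ) ^ ((2*(k:ℝ)+3)*s) := by
          apply hmono
          rw [abs_of_neg hs]
          nlinarith [Nat.cast_nonneg (α := ℝ) k]
        have step2 : (2:ℝ) ^ ((2*(k:ℝ)+3)*s) = ((2:ℝ) ^ (2*(k:ℝ)+3)) ^ s :=
          Real.rpow_mul (by norm_num) _ s
        calc (2:ℝ) ^ ((2*(k:ℝ)*s - 4*|s|) : ℝ) ≤ ((2:ℝ) ^ (2*(k:ℝ)+3)) ^ s := by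
              rw [← step2]; exact step1
          _ ≤ (1 + ‖x‖ ^ 2) ^ s := Real.rpow_le_rpow_of_nonpos (by positivity) hQ2 hs.le
    -- change of variables
    have hcov : ∫⁻ x in A k, ENNReal.ofReal (g x ^ 2)
        = ENNReal.ofReal (((2:ℝ) ^ k) ^ N) * ∫⁻ y in A 0, ENNReal.ofReal (g ((2:ℝ) ^ k • y) ^ 2) := by
      rw [hAsmul k]
      exact lintegral_smul_set _ h2k _ (hAmeas 0) _
    have hgy : ∫⁻ y in A 0, ENNReal.ofReal (g ((2:ℝ) ^ k • y) ^ 2)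
        = ENNReal.ofReal (((2:ℝ) ^ k) ^ ((2*a) : ℝ)) * I₀ := by
      rw [hI₀, ← lintegral_const_mul' _ _ ENNReal.ofReal_ne_top]
      apply setLIntegral_congr_fun (hAmeas 0)
      intro y hy
      rw [hAmem] at hy
      have hy0 : y ≠ 0 := by
        intro h; rw [h, norm_zero] at hy; rw [pow_zero] at hy; linarith [hy.1]
      beta_reduce
      rw [hhom _ h2k y hy0, mul_pow, ← ENNReal.ofReal_mul (by positivity)]
      congr 1
      rw [← Real.rpow_natCast (((2:ℝ) ^ k) ^ a) 2, ← Real.rpow_mul h2k.le]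
      push_cast
      ring_nf
    calc c₀ * I₀
        ≤ ENNReal.ofReal ((2:ℝ) ^ ((2*(k:ℝ)*s - 4*|s|) : ℝ) * (((2:ℝ) ^ k) ^ N * ((2:ℝ) ^ k) ^ ((2*a) : ℝ))) * I₀ := by
          apply mul_le_mul_left (ENNReal.ofReal_le_ofReal _)
          -- constant comparison
          have e1 : ((2:ℝ) ^ k) ^ N = (2:ℝ) ^ ((k:ℝ) * N) := by
            rw [← Real.rpow_natCast (2:ℝ) k, ← Real.rpow_natCast ((2:ℝ) ^ ((k:ℝ))) N,
              ← Real.rpow_mul (by norm_num)]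
          have e2 : ((2:ℝ) ^ k) ^ ((2*a) : ℝ) = (2:ℝ) ^ ((k:ℝ) * (2*a)) := by
            rw [← Real.rpow_natCast (2:ℝ) k, ← Real.rpow_mul (by norm_num)]
          rw [e1, e2, ← Real.rpow_add (by norm_num), ← Real.rpow_add (by norm_num)]
          apply Real.rpow_le_rpow_of_exponent_le (by norm_num : (1:ℝ) ≤ 2)
          have hk0 : (0:ℝ) ≤ (k:ℝ) := Nat.cast_nonneg k
          have hprod : 0 ≤ (k:ℝ) * (2 * a + 2 * s + N) := mul_nonneg hk0 hcond
          nlinarith [hprod]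
      _ = ENNReal.ofReal ((2:ℝ) ^ ((2*(k:ℝ)*s - 4*|s|) : ℝ)) *
            (ENNReal.ofReal (((2:ℝ) ^ k) ^ N) * (ENNReal.ofReal (((2:ℝ) ^ k) ^ ((2*a) : ℝ)) * I₀)) := by
          rw [ENNReal.ofReal_mul (by positivity), ENNReal.ofReal_mul (by positivity)]
          ring
      _ = ENNReal.ofReal ((2:ℝ) ^ ((2*(k:ℝ)*s - 4*|s|) : ℝ)) * ∫⁻ x in A k, ENNReal.ofReal (g x ^ 2) := by
          rw [hcov, hgy]
      _ = ∫⁻ x in A k, ENNReal.ofReal ((2:ℝ) ^ ((2*(k:ℝ)*s - 4*|s|) : ℝ)) * ENNReal.ofReal (g x ^ 2) := by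
          rw [lintegral_const_mul' _ _ ENNReal.ofReal_ne_top]
      _ ≤ ∫⁻ x in A k, ENNReal.ofReal ((1 + ‖x‖ ^ 2) ^ s * g x ^ 2) := by
          apply setLIntegral_mono' (hAmeas k)
          intro x hx
          rw [← ENNReal.ofReal_mul (by positivity)]
          exact ENNReal.ofReal_le_ofReal (hw x hx)
  -- conclude
  rw [← hAuni, lintegral_iUnion hAmeas hAdisj]
  rw [eq_top_iff]
  calc (⊤ : ℝ≥0∞) = ∑' _ : ℕ, c₀ * I₀ := by
        rw [ENNReal.tsum_const_eq_top_of_ne_zero]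
        exact mul_ne_zero hc₀0 hI₀pos.ne'
    _ ≤ ∑' k : ℕ, ∫⁻ x in A k, ENNReal.ofReal ((1 + ‖x‖ ^ 2) ^ s * g x ^ 2) :=
        ENNReal.tsum_le_tsum hIk

lemma norm_iteratedFDerivWithin_hom {N : ℕ} {F : Type*} [NormedAddCommGroup F] [NormedSpace ℝ F]
    (h : ℝ) (f : EuclideanSpace ℝ (Fin N) → F)
    (hsm : ContDiffOn ℝ (⊤ : ℕ∞) f {(0 : EuclideanSpace ℝ (Fin N))}ᶜ)
    (hhom : ∀ t : ℝ, 0 < t → ∀ x : EuclideanSpace ℝ (Fin N), x ≠ 0 →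
      f (t • x) = t ^ h • f x)
    (j : ℕ) (t : ℝ) (ht : 0 < t) (x : EuclideanSpace ℝ (Fin N)) (hx : x ≠ 0) :
    ‖iteratedFDerivWithin ℝ j f {(0 : EuclideanSpace ℝ (Fin N))}ᶜ (t • x)‖
      = t ^ (h - j) * ‖iteratedFDerivWithin ℝ j f {(0 : EuclideanSpace ℝ (Fin N))}ᶜ x‖ := by
  set S : Set (EuclideanSpace ℝ (Fin N)) := {(0 : EuclideanSpace ℝ (Fin N))}ᶜ with hS
  have hUopen : IsOpen S := isOpen_compl_singleton
  have hU : UniqueDiffOn ℝ S := hUopen.uniqueDiffOn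
  have ht0 : t ≠ 0 := ht.ne'
  -- scaling continuous linear equivalence
  let e : EuclideanSpace ℝ (Fin N) ≃L[ℝ] EuclideanSpace ℝ (Fin N) :=
    { LinearEquiv.smulOfNeZero ℝ _ t ht0 with
      continuous_toFun := continuous_const_smul t
      continuous_invFun := continuous_const_smul t⁻¹ }
  have he : ∀ y, e y = t • y := fun y => rfl
  have hpre : (⇑e) ⁻¹' S = S := by
    ext y
    simp only [Set.mem_preimage, hS, Set.mem_compl_iff, Set.mem_singleton_iff, he]
    rw [smul_eq_zero]
    simp [ht0]
  have hxS : x ∈ S := hx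
  have htxS : e x ∈ S := by
    rw [he]
    simp only [hS, Set.mem_compl_iff, Set.mem_singleton_iff, smul_eq_zero]
    push_neg
    exact ⟨ht0, hx⟩
  -- step 1 : derivative of f ∘ e
  have step1 : iteratedFDerivWithin ℝ j (f ∘ e) S x
      = (iteratedFDerivWithin ℝ j f S (t • x)).compContinuousLinearMap (fun _ => (e : EuclideanSpace ℝ (Fin N) →L[ℝ] EuclideanSpace ℝ (Fin N))) := by
    have := e.iteratedFDerivWithin_comp_right f hU htxS j
    rw [hpre] at this
    rw [this, he]
  have step1' : (iteratedFDerivWithin ℝ j f S (t • x)).compContinuousLinearMap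
      (fun _ => (e : EuclideanSpace ℝ (Fin N) →L[ℝ] EuclideanSpace ℝ (Fin N)))
      = (t ^ j : ℝ) • iteratedFDerivWithin ℝ j f S (t • x) := by
    ext m
    rw [ContinuousMultilinearMap.compContinuousLinearMap_apply,
      ContinuousMultilinearMap.smul_apply]
    have : (fun i : Fin j => (e : EuclideanSpace ℝ (Fin N) →L[ℝ] EuclideanSpace ℝ (Fin N)) (m i))
        = fun i => t • m i := by
      funext i; exact he (m i)
    rw [this]
    rw [show (fun i : Fin j => t • m i) = fun i => (fun _ : Fin j => t) i • m i from rfl,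
      ContinuousMultilinearMap.map_smul_univ]
    simp [Finset.prod_const]
  -- step 2 : f ∘ e = t^h • f on S
  have step2 : iteratedFDerivWithin ℝ j (f ∘ e) S x
      = (t ^ h : ℝ) • iteratedFDerivWithin ℝ j f S x := by
    have heq : Set.EqOn (f ∘ e) ((t ^ h : ℝ) • f) S := by
      intro y hy
      have hy0 : y ≠ 0 := hy
      simp only [Function.comp_apply, Pi.smul_apply, he]
      exact hhom t ht y hy0
    rw [iteratedFDerivWithin_congr heq hxS j]
    exact iteratedFDerivWithin_const_smul_apply ((hsm.contDiffWithinAt hxS).of_le (by exact_mod_cast le_top)) hU hxS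
  have hnorm : t ^ j * ‖iteratedFDerivWithin ℝ j f S (t • x)‖
      = t ^ h * ‖iteratedFDerivWithin ℝ j f S x‖ := by
    have h1 : ‖iteratedFDerivWithin ℝ j (f ∘ e) S x‖
        = t ^ j * ‖iteratedFDerivWithin ℝ j f S (t • x)‖ := by
      rw [step1, step1', norm_smul, Real.norm_eq_abs, abs_pow, abs_of_pos ht]
    have h2 : ‖iteratedFDerivWithin ℝ j (f ∘ e) S x‖
        = t ^ h * ‖iteratedFDerivWithin ℝ j f S x‖ := by
      rw [step2, norm_smul, Real.norm_eq_abs, abs_of_pos (Real.rpow_pos_of_pos ht h)]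
    rw [← h1, h2]
  have htj : (0:ℝ) < t ^ j := by positivity
  have hfinal : t ^ (h - (j:ℝ)) * t ^ (j:ℕ) = t ^ h := by
    rw [← Real.rpow_natCast t j, ← Real.rpow_add ht]
    congr 1; ring
  field_simp
  rw [mul_comm (t ^ (h - (j:ℝ))) _] at *
  nlinarith [hnorm, hfinal, norm_nonneg (iteratedFDerivWithin ℝ j f S x), htj]


theorem homogeneous_weighted_L2_Sobolev_criterion
    (N : ℕ) (hN : 2 ≤ N) (F : Type*) [NormedAddCommGroup F] [NormedSpace ℝ F]
    [FiniteDimensional ℝ F] (s h : ℝ) (m : ℕ)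
    (f : EuclideanSpace ℝ (Fin N) → F)
    (hsm : ContDiffOn ℝ (⊤ : ℕ∞) f {(0 : EuclideanSpace ℝ (Fin N))}ᶜ)
    (hhom : ∀ t : ℝ, 0 < t → ∀ x : EuclideanSpace ℝ (Fin N), x ≠ 0 →
      f (t • x) = t ^ h • f x)
    (hne : ∃ x : EuclideanSpace ℝ (Fin N), ‖x‖ = 1 ∧ f x ≠ 0) :
    ((∫⁻ x in {x : EuclideanSpace ℝ (Fin N) | 1 ≤ ‖x‖},
        ENNReal.ofReal ((1 + ‖x‖ ^ 2) ^ s * ‖f x‖ ^ 2)) < ⊤ ↔ h < -s - N / 2) ∧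
    ((∀ j ≤ m,
        (∫⁻ x in {x : EuclideanSpace ℝ (Fin N) | 1 ≤ ‖x‖},
          ENNReal.ofReal ((1 + ‖x‖ ^ 2) ^ s *
            ‖iteratedFDerivWithin ℝ j f {(0 : EuclideanSpace ℝ (Fin N))}ᶜ x‖ ^ 2)) < ⊤)
      ↔ h < -s - N / 2) := by
  have hN1 : 1 ≤ N := le_trans (by norm_num) hN
  have hU : UniqueDiffOn ℝ ({(0 : EuclideanSpace ℝ (Fin N))}ᶜ : Set (EuclideanSpace ℝ (Fin N))) :=
    isOpen_compl_singleton.uniqueDiffOn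
  -- the norm function of f
  have hgcont : ContinuousOn (fun x => ‖f x‖) {(0 : EuclideanSpace ℝ (Fin N))}ᶜ :=
    hsm.continuousOn.norm
  have hgpos : ∀ x : EuclideanSpace ℝ (Fin N), 0 ≤ ‖f x‖ := fun x => norm_nonneg _
  have hghom : ∀ t : ℝ, 0 < t → ∀ x : EuclideanSpace ℝ (Fin N), x ≠ 0 →
      ‖f (t • x)‖ = t ^ h * ‖f x‖ := by
    intro t ht x hx
    rw [hhom t ht x hx, norm_smul, Real.norm_eq_abs, abs_of_pos (Real.rpow_pos_of_pos ht h)]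
  have hgne : ∃ x : EuclideanSpace ℝ (Fin N), ‖x‖ = 1 ∧ ‖f x‖ ≠ 0 := by
    obtain ⟨x, hx1, hx2⟩ := hne
    exact ⟨x, hx1, by simpa using hx2⟩
  -- first equivalence
  have first : (∫⁻ x in {x : EuclideanSpace ℝ (Fin N) | 1 ≤ ‖x‖},
      ENNReal.ofReal ((1 + ‖x‖ ^ 2) ^ s * ‖f x‖ ^ 2)) < ⊤ ↔ h < -s - N / 2 := by
    constructor
    · intro hint
      by_contra hc
      push_neg at hc
      have := lintegral_eq_top_hom hN1 s h (fun x => ‖f x‖) hgcont hgpos hghom hgne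
        (by linarith)
      rw [this] at hint
      exact lt_irrefl _ hint
    · intro hc
      exact lintegral_lt_top_hom hN1 s h (fun x => ‖f x‖) hgcont hgpos hghom hc
  refine ⟨first, ?_⟩
  constructor
  · intro H
    have h0 := H 0 (Nat.zero_le m)
    rw [← first]
    have : (∫⁻ x in {x : EuclideanSpace ℝ (Fin N) | 1 ≤ ‖x‖},
        ENNReal.ofReal ((1 + ‖x‖ ^ 2) ^ s *
          ‖iteratedFDerivWithin ℝ 0 f {(0 : EuclideanSpace ℝ (Fin N))}ᶜ x‖ ^ 2))
        = (∫⁻ x in {x : EuclideanSpace ℝ (Fin N) | 1 ≤ ‖x‖},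
            ENNReal.ofReal ((1 + ‖x‖ ^ 2) ^ s * ‖f x‖ ^ 2)) := by
      apply lintegral_congr
      intro x
      rw [norm_iteratedFDerivWithin_zero]
    rwa [this] at h0
  · intro hc j _
    have hcontj : ContinuousOn
        (fun x => ‖iteratedFDerivWithin ℝ j f {(0 : EuclideanSpace ℝ (Fin N))}ᶜ x‖)
        {(0 : EuclideanSpace ℝ (Fin N))}ᶜ :=
      (hsm.continuousOn_iteratedFDerivWithin (by exact_mod_cast le_top) hU).norm
    have hhomj : ∀ t : ℝ, 0 < t → ∀ x : EuclideanSpace ℝ (Fin N), x ≠ 0 →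
        ‖iteratedFDerivWithin ℝ j f {(0 : EuclideanSpace ℝ (Fin N))}ᶜ (t • x)‖
          = t ^ (h - j) * ‖iteratedFDerivWithin ℝ j f {(0 : EuclideanSpace ℝ (Fin N))}ᶜ x‖ :=
      fun t ht x hx => norm_iteratedFDerivWithin_hom h f hsm hhom j t ht x hx
    have hcondj : h - (j : ℝ) < -s - N / 2 := by
      have : (0:ℝ) ≤ j := Nat.cast_nonneg j
      linarith
    exact lintegral_lt_top_hom hN1 s (h - j)
      (fun x => ‖iteratedFDerivWithin ℝ j f {(0 : EuclideanSpace ℝ (Fin N))}ᶜ x‖)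
      hcontj (fun x => norm_nonneg _) hhomj hcondj
end

section
/- Let N ≥ 1 be a natural number, F a finite-dimensional real normed vector space, s, h ∈ ℝ with h < −s − N/2, and let f : ℝ^N → F be smooth away from 0 and positively homogeneous of degree h. Then for every m ∈ ℕ, ∫_{A_1} (1+‖x‖²)^s ‖D^m f(x)‖² dx < ∞; that is, f together with all its derivatives of every order lies in the weighted space L²_s(A_1). -/
open MeasureTheory Real Set

/-- Pure real-number inequality used for the pointwise bound of the integrand. -/
lemma aux_real_bound {r C d a s : ℝ} (hr : 1 ≤ r) (hC : 0 ≤ C) (hd : 0 ≤ d)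
    (hdC : d ≤ C * r ^ a) :
    (1 + r ^ 2) ^ s * d ^ 2 ≤ (C ^ 2 * 2 ^ |a|) * (1 + r ^ 2) ^ (s + a) := by
  have hrpos : (0 : ℝ) < r := lt_of_lt_of_le one_pos hr
  have hbpos : (0 : ℝ) < 1 + r ^ 2 := by positivity
  have hDx : d ^ 2 ≤ (C * r ^ a) ^ 2 := by nlinarith [Real.rpow_nonneg hrpos.le a]
  have hsq : (C * r ^ a) ^ 2 = C ^ 2 * r ^ (2 * a) := by
    rw [mul_pow, ← Real.rpow_natCast (r ^ a) 2, ← Real.rpow_mul hrpos.le]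
    norm_num [mul_comm]
  have hra : r ^ (2 * a) ≤ 2 ^ |a| * (1 + r ^ 2) ^ a := by
    have h2a : r ^ (2 * a) = (r ^ 2) ^ a := by
      rw [← Real.rpow_natCast r 2, ← Real.rpow_mul hrpos.le]
      norm_num
    rw [h2a]
    rcases le_or_gt 0 a with hge | hlt
    · have h1 : (r ^ 2 : ℝ) ^ a ≤ (1 + r ^ 2) ^ a :=
        Real.rpow_le_rpow (by positivity) (by linarith) hge
      have h2 : (1 : ℝ) ≤ 2 ^ |a| := Real.one_le_rpow one_le_two (abs_nonneg a)
      nlinarith [Real.rpow_nonneg hbpos.le a]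
    · have hr2 : (1 + r ^ 2) / 2 ≤ r ^ 2 := by nlinarith
      have h1 : (r ^ 2 : ℝ) ^ a ≤ ((1 + r ^ 2) / 2) ^ a :=
        Real.rpow_le_rpow_of_nonpos (by positivity) hr2 hlt.le
      have h2 : ((1 + r ^ 2) / 2 : ℝ) ^ a = (1 + r ^ 2) ^ a / 2 ^ a :=
        Real.div_rpow hbpos.le (by norm_num) a
      have h3 : (2 : ℝ) ^ |a| = ((2 : ℝ) ^ a)⁻¹ := by
        rw [abs_of_neg hlt, Real.rpow_neg (by norm_num)]
      rw [h2, div_eq_inv_mul] at h1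
      rw [h3]
      exact h1
  have hadd : (1 + r ^ 2) ^ s * (1 + r ^ 2) ^ a = (1 + r ^ 2) ^ (s + a) :=
    (Real.rpow_add hbpos s a).symm
  have hspos : (0 : ℝ) ≤ (1 + r ^ 2) ^ s := Real.rpow_nonneg hbpos.le s
  calc (1 + r ^ 2) ^ s * d ^ 2
      ≤ (1 + r ^ 2) ^ s * (C ^ 2 * r ^ (2 * a)) := by
        rw [← hsq]; exact mul_le_mul_of_nonneg_left hDx hspos
    _ ≤ (1 + r ^ 2) ^ s * (C ^ 2 * (2 ^ |a| * (1 + r ^ 2) ^ a)) := by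
        refine mul_le_mul_of_nonneg_left ?_ hspos
        exact mul_le_mul_of_nonneg_left hra (by positivity)
    _ = (C ^ 2 * 2 ^ |a|) * ((1 + r ^ 2) ^ s * (1 + r ^ 2) ^ a) := by ring
    _ = (C ^ 2 * 2 ^ |a|) * (1 + r ^ 2) ^ (s + a) := by rw [hadd]

/-- The norm of the `m`-th derivative of a positively homogeneous function of degree `h`
scales with exponent `h - m`. -/
lemma aux_homog_deriv_norm {N : ℕ} {F : Type*} [NormedAddCommGroup F] [NormedSpace ℝ F]
    {f : EuclideanSpace ℝ (Fin N) → F} {h : ℝ}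
    (hsm : ContDiffOn ℝ (⊤ : ℕ∞) f {(0 : EuclideanSpace ℝ (Fin N))}ᶜ)
    (hhom : ∀ t : ℝ, 0 < t → ∀ x : EuclideanSpace ℝ (Fin N), x ≠ 0 →
      f (t • x) = t ^ h • f x)
    (m : ℕ) {t : ℝ} (ht : 0 < t) {x : EuclideanSpace ℝ (Fin N)} (hx : x ≠ 0) :
    ‖iteratedFDerivWithin ℝ m f {(0 : EuclideanSpace ℝ (Fin N))}ᶜ (t • x)‖
      = t ^ (h - m) * ‖iteratedFDerivWithin ℝ m f {(0 : EuclideanSpace ℝ (Fin N))}ᶜ x‖ := by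
  have hU : UniqueDiffOn ℝ ({(0 : EuclideanSpace ℝ (Fin N))}ᶜ : Set _) :=
    isOpen_compl_singleton.uniqueDiffOn
  have hxS : x ∈ ({(0 : EuclideanSpace ℝ (Fin N))}ᶜ : Set _) := hx
  have htne : t ≠ 0 := ht.ne'
  let e : EuclideanSpace ℝ (Fin N) ≃L[ℝ] EuclideanSpace ℝ (Fin N) :=
    (LinearEquiv.smulOfNeZero ℝ _ t htne).toContinuousLinearEquiv
  have he : ∀ y : EuclideanSpace ℝ (Fin N), e y = t • y := fun y => rfl
  have hpre : (⇑e) ⁻¹' ({(0 : EuclideanSpace ℝ (Fin N))}ᶜ : Set _) = {0}ᶜ := by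
    ext y
    simp only [Set.mem_preimage, Set.mem_compl_iff, Set.mem_singleton_iff, he,
      smul_eq_zero, not_or]
    tauto
  have hexS : e x ∈ ({(0 : EuclideanSpace ℝ (Fin N))}ᶜ : Set _) := by
    simp only [Set.mem_compl_iff, Set.mem_singleton_iff, he, smul_eq_zero, not_or]
    exact ⟨htne, hx⟩
  have key := e.iteratedFDerivWithin_comp_right f hU hexS m
  rw [hpre] at key
  have heq : Set.EqOn (f ∘ ⇑e) (t ^ h • f)
      ({(0 : EuclideanSpace ℝ (Fin N))}ᶜ : Set _) := by
    intro y hy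
    simp only [Function.comp_apply, he, Pi.smul_apply]
    exact hhom t ht y hy
  rw [iteratedFDerivWithin_congr heq hxS,
    iteratedFDerivWithin_const_smul_apply ((hsm x hxS).of_le (by exact_mod_cast le_top)) hU hxS] at key
  have hcomp : (iteratedFDerivWithin ℝ m f {0}ᶜ (e x)).compContinuousLinearMap
      (fun _ => (e : EuclideanSpace ℝ (Fin N) →L[ℝ] EuclideanSpace ℝ (Fin N)))
      = (t ^ m : ℝ) • iteratedFDerivWithin ℝ m f {0}ᶜ (e x) := by
    ext v
    simp only [ContinuousMultilinearMap.compContinuousLinearMap_apply,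
      ContinuousMultilinearMap.smul_apply]
    have hv : (fun i => (e : EuclideanSpace ℝ (Fin N) →L[ℝ] EuclideanSpace ℝ (Fin N)) (v i))
        = fun i => t • v i := by
      funext i; exact he (v i)
    rw [hv, (iteratedFDerivWithin ℝ m f {0}ᶜ (e x)).map_smul_univ (fun _ => t) v]
    simp [Finset.prod_const]
  rw [hcomp] at key
  have hex : e x = t • x := he x
  rw [hex] at key
  -- key : t ^ h • D x = t ^ m • D (t • x)
  have hnorm := congrArg norm key
  rw [norm_smul, norm_smul] at hnorm
  have hth : 0 < t ^ h := rpow_pos_of_pos ht h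
  have htm : 0 < (t : ℝ) ^ m := pow_pos ht m
  rw [Real.norm_eq_abs, Real.norm_eq_abs, abs_of_pos hth, abs_of_pos htm] at hnorm
  have hgoal : ‖iteratedFDerivWithin ℝ m f {0}ᶜ (t • x)‖
      = t ^ h / t ^ m * ‖iteratedFDerivWithin ℝ m f {0}ᶜ x‖ := by
    field_simp at hnorm ⊢
    linarith [hnorm]
  rw [hgoal, Real.rpow_sub ht, Real.rpow_natCast]

theorem homogeneous_derivatives_in_weighted_L2
    (N : ℕ) (hN : 1 ≤ N) (F : Type*) [NormedAddCommGroup F] [NormedSpace ℝ F]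
    [FiniteDimensional ℝ F] (s h : ℝ) (hh : h < -s - N / 2)
    (f : EuclideanSpace ℝ (Fin N) → F)
    (hsm : ContDiffOn ℝ (⊤ : ℕ∞) f {(0 : EuclideanSpace ℝ (Fin N))}ᶜ)
    (hhom : ∀ t : ℝ, 0 < t → ∀ x : EuclideanSpace ℝ (Fin N), x ≠ 0 →
      f (t • x) = t ^ h • f x) :
    ∀ m : ℕ,
      (∫⁻ x in {x : EuclideanSpace ℝ (Fin N) | 1 ≤ ‖x‖},
        ENNReal.ofReal ((1 + ‖x‖ ^ 2) ^ s *
          ‖iteratedFDerivWithin ℝ m f {(0 : EuclideanSpace ℝ (Fin N))}ᶜ x‖ ^ 2)) < ⊤ := by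
  intro m
  have hU : UniqueDiffOn ℝ ({(0 : EuclideanSpace ℝ (Fin N))}ᶜ : Set _) :=
    isOpen_compl_singleton.uniqueDiffOn
  -- bound on the unit sphere
  have hsub : Metric.sphere (0 : EuclideanSpace ℝ (Fin N)) 1 ⊆ {0}ᶜ := by
    intro x hx
    have hx1 : ‖x‖ = 1 := mem_sphere_zero_iff_norm.1 hx
    simp only [Set.mem_compl_iff, Set.mem_singleton_iff]
    intro h0
    rw [h0] at hx1; simp at hx1
  obtain ⟨C, hC⟩ := (isCompact_sphere (0 : EuclideanSpace ℝ (Fin N)) 1).exists_bound_of_continuousOn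
    ((hsm.continuousOn_iteratedFDerivWithin (m := m) (by exact_mod_cast le_top) hU).mono hsub)
  set C' : ℝ := max C 0 with hC'
  have hC'nn : 0 ≤ C' := le_max_right _ _
  set a : ℝ := h - m with ha
  have hbound : ∀ x : EuclideanSpace ℝ (Fin N), 1 ≤ ‖x‖ →
      ‖iteratedFDerivWithin ℝ m f {0}ᶜ x‖ ≤ C' * ‖x‖ ^ a := by
    intro x hx1
    have hxpos : (0 : ℝ) < ‖x‖ := lt_of_lt_of_le one_pos hx1
    have hyn1 : ‖(‖x‖⁻¹ • x : EuclideanSpace ℝ (Fin N))‖ = 1 := by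
      rw [norm_smul, Real.norm_eq_abs, abs_of_pos (inv_pos.2 hxpos),
        inv_mul_cancel₀ hxpos.ne']
    have hys : (‖x‖⁻¹ • x : EuclideanSpace ℝ (Fin N)) ∈ Metric.sphere (0 : EuclideanSpace ℝ (Fin N)) 1 :=
      mem_sphere_zero_iff_norm.2 hyn1
    have hyne : (‖x‖⁻¹ • x : EuclideanSpace ℝ (Fin N)) ≠ 0 := by
      intro h0; rw [h0] at hyn1; simp at hyn1
    have hkey := aux_homog_deriv_norm hsm hhom m hxpos hyne
    rw [smul_inv_smul₀ hxpos.ne' x] at hkey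
    rw [hkey]
    calc ‖x‖ ^ (h - (m : ℝ)) * ‖iteratedFDerivWithin ℝ m f {0}ᶜ (‖x‖⁻¹ • x)‖
        ≤ ‖x‖ ^ (h - (m : ℝ)) * C' :=
          mul_le_mul_of_nonneg_left ((hC _ hys).trans (le_max_left _ _))
            (rpow_nonneg hxpos.le _)
      _ = C' * ‖x‖ ^ a := by rw [ha, mul_comm]
  -- the dominating function is integrable
  have hexp : (Module.finrank ℝ (EuclideanSpace ℝ (Fin N)) : ℝ) < -(2 * (s + a)) := by
    have hfr : Module.finrank ℝ (EuclideanSpace ℝ (Fin N)) = N := finrank_euclideanSpace_fin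
    have hm : (0 : ℝ) ≤ (m : ℝ) := Nat.cast_nonneg m
    rw [hfr, ha]
    linarith
  have hint : Integrable (fun x : EuclideanSpace ℝ (Fin N) => (1 + ‖x‖ ^ 2) ^ (s + a))
      (volume : Measure (EuclideanSpace ℝ (Fin N))) := by
    have h0 := integrable_rpow_neg_one_add_norm_sq
      (E := EuclideanSpace ℝ (Fin N)) (μ := volume) (r := -(2 * (s + a))) hexp
    refine h0.congr (Filter.Eventually.of_forall fun x => ?_)
    have he2 : -(-(2 * (s + a))) / 2 = s + a := by ring
    rw [he2]
  have hKint : Integrable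
      (fun x : EuclideanSpace ℝ (Fin N) => (C' ^ 2 * 2 ^ |a|) * (1 + ‖x‖ ^ 2) ^ (s + a))
      (volume : Measure (EuclideanSpace ℝ (Fin N))) := hint.const_mul _
  have hA : MeasurableSet {x : EuclideanSpace ℝ (Fin N) | 1 ≤ ‖x‖} :=
    (isClosed_le continuous_const continuous_norm).measurableSet
  calc (∫⁻ x in {x : EuclideanSpace ℝ (Fin N) | 1 ≤ ‖x‖},
        ENNReal.ofReal ((1 + ‖x‖ ^ 2) ^ s * ‖iteratedFDerivWithin ℝ m f {0}ᶜ x‖ ^ 2))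
      ≤ ∫⁻ x in {x : EuclideanSpace ℝ (Fin N) | 1 ≤ ‖x‖},
          ENNReal.ofReal ((C' ^ 2 * 2 ^ |a|) * (1 + ‖x‖ ^ 2) ^ (s + a)) := by
        refine setLIntegral_mono' hA fun x hx => ENNReal.ofReal_le_ofReal ?_
        exact aux_real_bound hx hC'nn (norm_nonneg _) (hbound x hx)
    _ ≤ ∫⁻ x, ENNReal.ofReal ((C' ^ 2 * 2 ^ |a|) * (1 + ‖x‖ ^ 2) ^ (s + a)) :=
        setLIntegral_le_lintegral _ _
    _ ≤ ∫⁻ x, (‖(C' ^ 2 * 2 ^ |a|) * (1 + ‖x‖ ^ 2) ^ (s + a)‖₊ : ENNReal) :=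
        lintegral_mono fun x => Real.ofReal_le_enorm _
    _ < ⊤ := hKint.hasFiniteIntegral
end
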